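/- Let N be a net and P a GR-process of N. Then ⌊P⌋ := ↓{⟦P'⟧ | P' ≤ P, P' finite} is a BD-run of N, i.e. it is prefix-closed and directed under the lifted prefix relation on ≈s*-equivalence classes of finite processes. -/

import Mathlib

open scoped Classical

noncomputable section

/-- A place/transition net: `pre t s` and `post t s` are the arc weights
`F(s,t)` and `F(t,s)` of the flow relation, and `M0` is the initial marking.
Every transition has a finite non-empty set of preplaces and a finite set of
postplaces. -/
structure Net (S : Type*) (T : Type*) where
  pre : T → S → ℕ
  post : T → S → ℕ
  M0 : S → ℕ
  pre_fin : ∀ t, {s | pre t s ≠ 0}.Finite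
  pre_ne : ∀ t, ∃ s, pre t s ≠ 0
  post_fin : ∀ t, {s | post t s ≠ 0}.Finite

namespace Net

variable {S T : Type*}

/-- `•G`: the multiset of preplaces of a finite multiset `G` of transitions,
as a function `S → ℕ`. -/
def preM (N : Net S T) (G : Multiset T) (s : S) : ℕ :=
  (G.map fun t => N.pre t s).sum

/-- `G•`: the multiset of postplaces of a finite multiset `G` of transitions. -/
def postM (N : Net S T) (G : Multiset T) (s : S) : ℕ :=
  (G.map fun t => N.post t s).sum

/-- The (non-empty, finite) multiset `G` of transitions is enabled in marking `M`. -/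
def Enabled (N : Net S T) (M : S → ℕ) (G : Multiset T) : Prop :=
  G ≠ 0 ∧ ∀ s, N.preM G s ≤ M s

/-- `G` is a step from `M` to `M'`. -/
def Step (N : Net S T) (M : S → ℕ) (G : Multiset T) (M' : S → ℕ) : Prop :=
  N.Enabled M G ∧ ∀ s, M' s = M s - N.preM G s + N.postM G s

/-- `M →σ M'`: sequential firing of the word `σ` of transitions. -/
def FireSeq (N : Net S T) : (S → ℕ) → List T → (S → ℕ) → Prop
  | M, [], M' => M' = M
  | M, t :: σ, M' => ∃ M₁, N.Step M {t} M₁ ∧ N.FireSeq M₁ σ M'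

/-- `σ` is a firing sequence of `N`. -/
def FS (N : Net S T) (σ : List T) : Prop := ∃ M', N.FireSeq N.M0 σ M'

/-- `M` is reachable from the initial marking. -/
def Reachable (N : Net S T) (M : S → ℕ) : Prop := ∃ σ, N.FireSeq N.M0 σ M

/-- Two firing sequences are adjacent iff they differ only in the exchange of
two neighbouring transitions that could have been fired in one step. -/
def Adjacent (N : Net S T) (σ ρ : List T) : Prop :=
  N.FS σ ∧ N.FS ρ ∧
    ∃ (σ₁ : List T) (t u : T) (σ₂ : List T) (M : S → ℕ),
      σ = σ₁ ++ t :: u :: σ₂ ∧ ρ = σ₁ ++ u :: t :: σ₂ ∧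
      N.FireSeq N.M0 σ₁ M ∧ N.Enabled M (t ::ₘ {u})

/-- `↔*`: the reflexive transitive closure of adjacency. -/
def AdjEquiv (N : Net S T) : List T → List T → Prop :=
  Relation.ReflTransGen N.Adjacent

/-- A structural conflict net: transitions that can occur together in a step
never share a preplace. -/
def StructuralConflictNet (N : Net S T) : Prop :=
  ∀ t u : T, (∃ M, N.Reachable M ∧ N.Enabled M (t ::ₘ {u})) →
    ∀ s, N.pre t s = 0 ∨ N.pre u s = 0

/-- The finite non-empty multiset `G` of transitions is in (semantic) conflict
in the marking `M`: every `G↾{t}` is enabled but `G` itself is not. -/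
def InConflict (N : Net S T) (M : S → ℕ) (G : Multiset T) : Prop :=
  G ≠ 0 ∧ (∀ t ∈ G, N.Enabled M (Multiset.replicate (G.count t) t)) ∧
    ¬ N.Enabled M G

/-- `N` is (semantic) conflict-free. -/
def ConflictFree (N : Net S T) : Prop :=
  ∀ M, N.Reachable M → ∀ G : Multiset T, ¬ N.InConflict M G

end Net

/-- The type of firing sequences of `N`. -/
def FSeq {S T : Type*} (N : Net S T) := {σ : List T // N.FS σ}

/-- Partial FS-runs: `↔*`-equivalence classes of firing sequences. -/
def PartialFSRun {S T : Type*} (N : Net S T) :=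
  Quot (fun σ ρ : FSeq N => N.AdjEquiv σ.1 ρ.1)

/-- `[σ]`, the `↔*`-equivalence class of a firing sequence. -/
def fsClass {S T : Type*} (N : Net S T) (σ : FSeq N) : PartialFSRun N :=
  Quot.mk _ σ

/-- The prefix order on partial FS-runs: `[σ] ≤ [ρ]` iff
`∃ μ, σ ≤ μ ↔* ρ`. -/
def fsRunLE {S T : Type*} (N : Net S T) (x y : PartialFSRun N) : Prop :=
  ∃ σ ρ : FSeq N, fsClass N σ = x ∧ fsClass N ρ = y ∧
    ∃ μ : List T, σ.1 <+: μ ∧ N.AdjEquiv μ ρ.1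

/-- An FS-run: a prefix-closed and directed set of partial FS-runs. -/
def IsFSRun {S T : Type*} (N : Net S T) (R : Set (PartialFSRun N)) : Prop :=
  (∀ x y, fsRunLE N x y → y ∈ R → x ∈ R) ∧
  (∀ x ∈ R, ∀ y ∈ R, ∃ z ∈ R, fsRunLE N x z ∧ fsRunLE N y z)

/-- An FS-run `R` is conflict-free iff whenever, for every `t` in a finite
non-empty multiset `G`, the class of `σ t^{G(t)}` belongs to `R` and
`M₀ →σ →(G↾{t})`, then `M₀ →σ →G`. -/
def ConflictFreeFSRun {S T : Type*} (N : Net S T)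
    (R : Set (PartialFSRun N)) : Prop :=
  ∀ (G : Multiset T) (σ : List T), G ≠ 0 →
    (∀ t ∈ G,
      (∃ h : N.FS (σ ++ List.replicate (G.count t) t),
        fsClass N ⟨σ ++ List.replicate (G.count t) t, h⟩ ∈ R) ∧
      ∃ M, N.FireSeq N.M0 σ M ∧
        N.Enabled M (Multiset.replicate (G.count t) t)) →
    ∃ M, N.FireSeq N.M0 σ M ∧ N.Enabled M G

/-- The raw data of a candidate (GR-)process of a net with places `S` and
transitions `T`: an occurrence net whose places are drawn from `α` and whose
transitions are drawn from `β`, together with the projections to `S` and `T`. -/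
structure RawProc (S T α β : Type*) where
  places : Set α
  transitions : Set β
  flowPT : α → β → ℕ
  flowTP : β → α → ℕ
  initMark : α → ℕ
  projS : α → S
  projT : β → T

namespace RawProc

variable {S T α β : Type*}

/-- The flow relation of the occurrence net, as a relation on `α ⊕ β`. -/
def flowRel (P : RawProc S T α β) : (α ⊕ β) → (α ⊕ β) → Prop := fun x y =>
  match x, y with
  | Sum.inl p, Sum.inr t => P.flowPT p t ≠ 0
  | Sum.inr t, Sum.inl p => P.flowTP t p ≠ 0
  | _, _ => False

/-- `F⁺`, the transitive closure of the flow relation. -/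
def causal (P : RawProc S T α β) : (α ⊕ β) → (α ⊕ β) → Prop :=
  Relation.TransGen P.flowRel

/-- `P` is finite iff its set of transitions is finite. -/
def FiniteProc (P : RawProc S T α β) : Prop := P.transitions.Finite

/-- `Q` is a prefix of `P` (written `Q ≤ P`): the places and transitions of `Q`
are included in those of `P`, the initial markings coincide, and flow relation
and projection of `Q` are the restrictions of those of `P`. -/
def IsPrefix (Q P : RawProc S T α β) : Prop :=
  Q.places ⊆ P.places ∧ Q.transitions ⊆ P.transitions ∧
  Q.initMark = P.initMark ∧
  (∀ p ∈ Q.places, ∀ t ∈ Q.transitions,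
    Q.flowPT p t = P.flowPT p t ∧ Q.flowTP t p = P.flowTP t p) ∧
  (∀ p ∈ Q.places, Q.projS p = P.projS p) ∧
  (∀ t ∈ Q.transitions, Q.projT t = P.projT t)

/-- Isomorphism of processes of the same net: a bijection between places and
between transitions preserving flow, initial marking and the projections. -/
def Iso (P Q : RawProc S T α β) : Prop :=
  ∃ (fS : α → α) (fT : β → β),
    Set.BijOn fS P.places Q.places ∧ Set.BijOn fT P.transitions Q.transitions ∧
    (∀ p ∈ P.places, ∀ t ∈ P.transitions,
      Q.flowPT (fS p) (fT t) = P.flowPT p t ∧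
      Q.flowTP (fT t) (fS p) = P.flowTP t p) ∧
    (∀ p ∈ P.places, Q.initMark (fS p) = P.initMark p) ∧
    (∀ p ∈ P.places, Q.projS (fS p) = P.projS p) ∧
    (∀ t ∈ P.transitions, Q.projT (fT t) = P.projT t)

/-- `swap(P,p,q)`: exchange the outgoing arcs of the places `p` and `q`. -/
def swap (P : RawProc S T α β) (p q : α) : RawProc S T α β :=
  { P with flowPT := fun x t =>
      if x = p then P.flowPT q t
      else if x = q then P.flowPT p t
      else P.flowPT x t }

/-- One step swapping equivalence `P ≈s Q`: `swap(P,p,q)` is isomorphic to `Q`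
for some causally unrelated places `p`, `q` with the same image in the net. -/
def SwapStep (P Q : RawProc S T α β) : Prop :=
  ∃ p q : α, p ∈ P.places ∧ q ∈ P.places ∧ P.projS p = P.projS q ∧
    ¬ P.causal (Sum.inl p) (Sum.inl q) ∧ ¬ P.causal (Sum.inl q) (Sum.inl p) ∧
    Iso (P.swap p q) Q

/-- `≈s*`: the reflexive transitive closure of one step swapping equivalence. -/
def SwapEquiv : RawProc S T α β → RawProc S T α β → Prop :=
  Relation.ReflTransGen SwapStep

/-- `Lin(P)`: the linearisations of a finite process `P`, i.e. the images under
the projection of the enumerations of its transitions compatible with `F*`. -/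
def Lin (P : RawProc S T α β) : Set (List T) :=
  { σ | ∃ ts : List β, ts.Nodup ∧ (∀ t : β, t ∈ ts ↔ t ∈ P.transitions) ∧
      (∀ (i j : ℕ) (hi : i < ts.length) (hj : j < ts.length),
        Relation.ReflTransGen P.flowRel
          (Sum.inr (ts.get ⟨i, hi⟩)) (Sum.inr (ts.get ⟨j, hj⟩)) → i ≤ j) ∧
      σ = ts.map P.projT }

end RawProc

/-- `P` is a (GR-)process of the net `N`: its underlying net is an occurrence
net (unbranched places, acyclic flow, finite causal pasts, transitions with
finite non-empty presets and finite postsets), the flow, initial marking and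
projections are normalised to vanish outside the places/transitions, and the
projection maps the process onto `N` respecting initial marking and arc
weights (counted via the preimages of the projection). -/
structure IsProcessOf {S T α β : Type*} (N : Net S T)
    (P : RawProc S T α β) : Prop where
  flowPT_dom : ∀ p t, P.flowPT p t ≠ 0 → p ∈ P.places ∧ t ∈ P.transitions
  flowTP_dom : ∀ t p, P.flowTP t p ≠ 0 → p ∈ P.places ∧ t ∈ P.transitions
  initMark_dom : ∀ p, p ∉ P.places → P.initMark p = 0
  pre_place : ∀ p ∈ P.places,
    {t | P.flowTP t p ≠ 0}.Subsingleton ∧ ∀ t, P.flowTP t p ≤ 1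
  post_place : ∀ p ∈ P.places,
    {t | P.flowPT p t ≠ 0}.Subsingleton ∧ ∀ t, P.flowPT p t ≤ 1
  init_one : ∀ p ∈ P.places, (∀ t, P.flowTP t p = 0) → P.initMark p = 1
  init_zero : ∀ p ∈ P.places, (∃ t, P.flowTP t p ≠ 0) → P.initMark p = 0
  acyclic : ∀ x, ¬ P.causal x x
  finite_past : ∀ t ∈ P.transitions,
    {u : β | P.causal (Sum.inr u) (Sum.inr t)}.Finite
  t_pre_fin : ∀ t ∈ P.transitions, {p | P.flowPT p t ≠ 0}.Finite
  t_pre_ne : ∀ t ∈ P.transitions, ∃ p, P.flowPT p t ≠ 0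
  t_post_fin : ∀ t ∈ P.transitions, {p | P.flowTP t p ≠ 0}.Finite
  proj_init_fin : ∀ s : S, {p | P.projS p = s ∧ P.initMark p ≠ 0}.Finite
  proj_init : ∀ s : S, (∑ᶠ p ∈ {p | P.projS p = s}, P.initMark p) = N.M0 s
  proj_pre : ∀ t ∈ P.transitions, ∀ s : S,
    (∑ᶠ p ∈ {p | P.projS p = s}, P.flowPT p t) = N.pre (P.projT t) s
  proj_post : ∀ t ∈ P.transitions, ∀ s : S,
    (∑ᶠ p ∈ {p | P.projS p = s}, P.flowTP t p) = N.post (P.projT t) s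

/-- The type of finite GR-processes of `N` with places in `α` and transitions
in `β`. -/
def FinProcOf {S T : Type*} (N : Net S T) (α β : Type*) :=
  {P : RawProc S T α β // IsProcessOf N P ∧ P.FiniteProc}

/-- Partial BD-runs: `≈s*`-equivalence classes of finite GR-processes. -/
def PartialBDRun {S T : Type*} (N : Net S T) (α β : Type*) :=
  Quot (fun P Q : FinProcOf N α β => RawProc.SwapEquiv P.1 Q.1)

/-- `⟦P⟧`, the `≈s*`-equivalence class of a finite process. -/
def bdClass {S T α β : Type*} (N : Net S T) (P : FinProcOf N α β) :
    PartialBDRun N α β :=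
  Quot.mk _ P

/-- The lifted prefix relation on `≈s*`-equivalence classes:
`⟦P⟧ ≤ ⟦Q⟧` iff `P ≈s* P' ≤ Q' ≈s* Q` for some `P'`, `Q'`. -/
def bdRunLE {S T α β : Type*} (N : Net S T)
    (x y : PartialBDRun N α β) : Prop :=
  ∃ P Q : FinProcOf N α β, bdClass N P = x ∧ bdClass N Q = y ∧
    ∃ P' Q' : RawProc S T α β,
      RawProc.SwapEquiv P.1 P' ∧ RawProc.IsPrefix P' Q' ∧
      RawProc.SwapEquiv Q' Q.1

/-- A BD-run: a prefix-closed and directed set of partial BD-runs. -/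
def IsBDRun {S T α β : Type*} (N : Net S T)
    (R : Set (PartialBDRun N α β)) : Prop :=
  (∀ x y, bdRunLE N x y → y ∈ R → x ∈ R) ∧
  (∀ x ∈ R, ∀ y ∈ R, ∃ z ∈ R, bdRunLE N x z ∧ bdRunLE N y z)

/-- `⌊P⌋ = ↓{⟦P'⟧ | P' ≤ P, P' finite}`: the prefix-closure of the set of
classes of finite prefixes of the process `P`. -/
def BDify {S T α β : Type*} (N : Net S T) (P : RawProc S T α β) :
    Set (PartialBDRun N α β) :=
  { x | ∃ Q : FinProcOf N α β, RawProc.IsPrefix Q.1 P ∧ bdRunLE N x (bdClass N Q) }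

/-- Swapping equivalence `P ≈s∞ Q` of (possibly infinite) processes:
`↓{⟦P'⟧ | P' ≤ P, P' finite} = ↓{⟦Q'⟧ | Q' ≤ Q, Q' finite}`. -/
def SwapEquivInf {S T α β : Type*} (N : Net S T)
    (P Q : RawProc S T α β) : Prop :=
  BDify N P = BDify N Q

/-- A canonical carrier type, large enough to host every GR-process of a net
with places `S` and transitions `T`. -/
abbrev BigCarrier (S T : Type*) := Set ((S ⊕ T) × ℕ)

end

section BDProofAux

open RawProc Set

variable {S T α β : Type*}

/-- the involutive exchange of two elements -/
noncomputable def sw {γ : Type*} (p q x : γ) : γ := if x = p then q else if x = q then p else x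

@[simp] lemma sw_left {γ : Type*} (p q : γ) : sw p q p = q := by simp [sw]

@[simp] lemma sw_right {γ : Type*} (p q : γ) : sw p q q = p := by
  by_cases h : q = p <;> simp [sw, h]

lemma sw_other {γ : Type*} {p q x : γ} (h1 : x ≠ p) (h2 : x ≠ q) : sw p q x = x := by
  simp [sw, h1, h2]

@[simp] lemma sw_sw {γ : Type*} (p q x : γ) : sw p q (sw p q x) = x := by
  by_cases h1 : x = p <;> by_cases h2 : x = q <;> simp [sw, h1, h2]

lemma sw_eq_iff {γ : Type*} {p q x y : γ} : sw p q x = y ↔ x = sw p q y := by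
  constructor <;> rintro rfl <;> simp

namespace RawProc

@[simp] lemma swap_places (P : RawProc S T α β) (p q : α) :
    (P.swap p q).places = P.places := rfl

@[simp] lemma swap_transitions (P : RawProc S T α β) (p q : α) :
    (P.swap p q).transitions = P.transitions := rfl

@[simp] lemma swap_flowTP (P : RawProc S T α β) (p q : α) :
    (P.swap p q).flowTP = P.flowTP := rfl

@[simp] lemma swap_initMark (P : RawProc S T α β) (p q : α) :
    (P.swap p q).initMark = P.initMark := rfl

@[simp] lemma swap_projS (P : RawProc S T α β) (p q : α) :
    (P.swap p q).projS = P.projS := rfl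

@[simp] lemma swap_projT (P : RawProc S T α β) (p q : α) :
    (P.swap p q).projT = P.projT := rfl

lemma swap_flowPT (P : RawProc S T α β) (p q x : α) (t : β) :
    (P.swap p q).flowPT x t = P.flowPT (sw p q x) t := by
  simp only [swap, sw]
  split_ifs <;> rfl

lemma swap_swap (P : RawProc S T α β) (p q : α) : (P.swap p q).swap p q = P := by
  cases P with
  | mk pl tr fPT fTP im pS pT =>
    simp only [swap]
    congr 1
    funext x t
    by_cases h1 : x = p <;> by_cases h2 : x = q <;> split_ifs <;> simp_all

lemma swap_self (P : RawProc S T α β) (p : α) : P.swap p p = P := by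
  cases P with
  | mk pl tr fPT fTP im pS pT =>
    simp only [swap]
    congr 1
    funext x t
    split_ifs <;> simp_all

lemma iso_rfl (P : RawProc S T α β) : Iso P P :=
  ⟨id, id, bijOn_id _, bijOn_id _, fun _ _ _ _ => ⟨rfl, rfl⟩, fun _ _ => rfl,
    fun _ _ => rfl, fun _ _ => rfl⟩

lemma iso_trans {P Q R : RawProc S T α β} (h1 : Iso P Q) (h2 : Iso Q R) : Iso P R := by
  obtain ⟨fS, fT, hbS, hbT, hflow, him, hpS, hpT⟩ := h1
  obtain ⟨gS, gT, hbS', hbT', hflow', him', hpS', hpT'⟩ := h2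
  refine ⟨gS ∘ fS, gT ∘ fT, hbS'.comp hbS, hbT'.comp hbT, ?_, ?_, ?_, ?_⟩
  · intro p hp t ht
    have h1 := hflow p hp t ht
    have h2 := hflow' (fS p) (hbS.mapsTo hp) (fT t) (hbT.mapsTo ht)
    exact ⟨h2.1.trans h1.1, h2.2.trans h1.2⟩
  · intro p hp; exact (him' (fS p) (hbS.mapsTo hp)).trans (him p hp)
  · intro p hp; exact (hpS' (fS p) (hbS.mapsTo hp)).trans (hpS p hp)
  · intro t ht; exact (hpT' (fT t) (hbT.mapsTo ht)).trans (hpT t ht)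

lemma SwapStep.iso_comp {P Q R : RawProc S T α β} (h : SwapStep P Q) (h2 : Iso Q R) :
    SwapStep P R := by
  obtain ⟨p, q, hp, hq, hproj, hc1, hc2, hiso⟩ := h
  exact ⟨p, q, hp, hq, hproj, hc1, hc2, iso_trans hiso h2⟩

lemma causal_mono {P Q : RawProc S T α β}
    (h : ∀ x y, P.flowRel x y → Q.flowRel x y) {x y} (hc : P.causal x y) : Q.causal x y :=
  Relation.TransGen.mono h _ _ hc

end RawProc

end BDProofAux
section BDProofAux2

open RawProc Set

variable {S T α β : Type*}

/-- both flow functions vanish outside places/transitions -/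
def NiceDoms (P : RawProc S T α β) : Prop :=
  (∀ x t, P.flowPT x t ≠ 0 → x ∈ P.places ∧ t ∈ P.transitions) ∧
  (∀ t x, P.flowTP t x ≠ 0 → x ∈ P.places ∧ t ∈ P.transitions)

/-- membership of a node in a process -/
def regMem (Y : RawProc S T α β) (v : α ⊕ β) : Prop :=
  match v with
  | .inl c => c ∈ Y.places
  | .inr d => d ∈ Y.transitions

@[simp] lemma regMem_inl (Y : RawProc S T α β) (c : α) : regMem Y (.inl c) ↔ c ∈ Y.places :=
  Iff.rfl

@[simp] lemma regMem_inr (Y : RawProc S T α β) (d : β) : regMem Y (.inr d) ↔ d ∈ Y.transitions :=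
  Iff.rfl

/-- An embedding of the process `Y` onto a "prefix region" of `G`. -/
structure Bundle (gS : α → α) (gT : β → β) (Y G : RawProc S T α β) : Prop where
  injS : Set.InjOn gS Y.places
  injT : Set.InjOn gT Y.transitions
  mapS : ∀ x ∈ Y.places, gS x ∈ G.places
  mapT : ∀ t ∈ Y.transitions, gT t ∈ G.transitions
  flowPT : ∀ x ∈ Y.places, ∀ t ∈ Y.transitions, G.flowPT (gS x) (gT t) = Y.flowPT x t
  flowTP : ∀ x ∈ Y.places, ∀ t ∈ Y.transitions, G.flowTP (gT t) (gS x) = Y.flowTP t x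
  initMark : ∀ x ∈ Y.places, G.initMark (gS x) = Y.initMark x
  projS : ∀ x ∈ Y.places, G.projS (gS x) = Y.projS x
  projT : ∀ t ∈ Y.transitions, G.projT (gT t) = Y.projT t
  full : ∀ t ∈ Y.transitions, ∀ b, b ∉ gS '' Y.places → G.flowPT b (gT t) = 0
  prodc : ∀ x ∈ Y.places, ∀ u, G.flowTP u (gS x) ≠ 0 → u ∈ gT '' Y.transitions

namespace Bundle

variable {gS : α → α} {gT : β → β} {Y G : RawProc S T α β}

lemma reflect_arc (B : Bundle gS gT Y G) {x : α ⊕ β} {w : α ⊕ β}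
    (h : G.flowRel x (Sum.map gS gT w)) (hw : regMem Y w) :
    ∃ v, x = Sum.map gS gT v ∧ regMem Y v ∧ Y.flowRel v w := by
  cases w with
  | inl c =>
    cases x with
    | inl c' => exact absurd h (by simp [RawProc.flowRel])
    | inr u =>
      have hu : G.flowTP u (gS c) ≠ 0 := h
      obtain ⟨d, hd, rfl⟩ := B.prodc c hw u hu
      refine ⟨.inr d, rfl, hd, ?_⟩
      have := B.flowTP c hw d hd
      exact by simpa [RawProc.flowRel, this] using hu
  | inr d =>
    cases x with
    | inr u => exact absurd h (by simp [RawProc.flowRel])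
    | inl c' =>
      have hc : G.flowPT c' (gT d) ≠ 0 := h
      by_cases hmem : c' ∈ gS '' Y.places
      · obtain ⟨c, hc0, rfl⟩ := hmem
        refine ⟨.inl c, rfl, hc0, ?_⟩
        have := B.flowPT c hc0 d hw
        exact by simpa [RawProc.flowRel, this] using hc
      · exact absurd (B.full d hw c' hmem) hc

lemma reflect (B : Bundle gS gT Y G) {x : α ⊕ β} {w : α ⊕ β}
    (h : G.causal x (Sum.map gS gT w)) (hw : regMem Y w) :
    ∃ v, x = Sum.map gS gT v ∧ regMem Y v ∧ Y.causal v w := by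
  induction h using Relation.TransGen.head_induction_on with
  | single h =>
    obtain ⟨v, rfl, hv, hrel⟩ := B.reflect_arc h hw
    exact ⟨v, rfl, hv, Relation.TransGen.single hrel⟩
  | head h1 _h2 ih =>
    obtain ⟨v, rfl, hv, hcaus⟩ := ih
    obtain ⟨v', rfl, hv', hrel⟩ := B.reflect_arc h1 hv
    exact ⟨v', rfl, hv', Relation.TransGen.head hrel hcaus⟩

lemma not_causal_of (B : Bundle gS gT Y G) {a b : α} (ha : a ∈ Y.places) (hb : b ∈ Y.places)
    (h : ¬ Y.causal (.inl a) (.inl b)) : ¬ G.causal (.inl (gS a)) (.inl (gS b)) := by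
  intro hc
  obtain ⟨v, hv, hvmem, hcaus⟩ := B.reflect (w := .inl b) hc hb
  cases v with
  | inr d => simp [Sum.map] at hv
  | inl c =>
    simp only [Sum.map, Function.comp] at hv
    have : gS a = gS c := by injection hv
    obtain rfl : c = a := B.injS hvmem ha this.symm
    exact h hcaus

end Bundle

end BDProofAux2
section BDProofAux3

open RawProc Set

variable {S T α β : Type*}

/-- node-level swap on the left -/
noncomputable def tau (p q : α) : α ⊕ β → α ⊕ β := Sum.map (sw p q) id

@[simp] lemma tau_inl (p q a : α) : (tau p q (Sum.inl a) : α ⊕ β) = Sum.inl (sw p q a) := rfl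

@[simp] lemma tau_inr (p q : α) (t : β) : (tau p q (Sum.inr t) : α ⊕ β) = Sum.inr t := rfl

lemma swap_flowRel (U : RawProc S T α β) (p q : α) (u v : α ⊕ β) :
    (U.swap p q).flowRel u v ↔ U.flowRel (tau p q u) v := by
  cases u <;> cases v <;>
    simp [RawProc.flowRel, tau, swap_flowPT]

section Tau

variable {U : RawProc S T α β} {p q : α}
variable (hacyc : ∀ x, ¬ U.causal x x)
variable (hpq : ¬ U.causal (.inl p) (.inl q)) (hqp : ¬ U.causal (.inl q) (.inl p))

include hacyc hpq hqp

lemma tau_causal {x y : α ⊕ β} (h : (U.swap p q).causal x y) :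
    U.causal (tau p q x) y ∨
      (U.causal (tau p q x) (.inl p) ∧ U.causal (.inl q) y) ∨
      (U.causal (tau p q x) (.inl q) ∧ U.causal (.inl p) y) := by
  induction h with
  | single h => exact Or.inl (Relation.TransGen.single ((swap_flowRel U p q _ _).1 h))
  | @tail z y hxz hzy ih =>
    have hzy' : U.flowRel (tau p q z) y := (swap_flowRel U p q _ _).1 hzy
    by_cases hzp : z = Sum.inl p
    · subst hzp
      have hq : U.flowRel (.inl q) y := by simpa using hzy'
      rcases ih with h1 | h2 | h3
      · exact Or.inr (Or.inl ⟨h1, Relation.TransGen.single hq⟩)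
      · exact absurd h2.2 hqp
      · exact absurd h3.2 (hacyc _)
    · by_cases hzq : z = Sum.inl q
      · subst hzq
        have hp : U.flowRel (.inl p) y := by simpa using hzy'
        rcases ih with h1 | h2 | h3
        · exact Or.inr (Or.inr ⟨h1, Relation.TransGen.single hp⟩)
        · exact absurd h2.2 (hacyc _)
        · exact absurd h3.2 hpq
      · have hz : tau p q z = z := by
          cases z with
          | inl a =>
            have h1 : a ≠ p := fun h => hzp (by rw [h])
            have h2 : a ≠ q := fun h => hzq (by rw [h])
            simp [sw_other h1 h2]
          | inr t => rfl
        rw [hz] at hzy'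
        rcases ih with h1 | h2 | h3
        · exact Or.inl (h1.tail hzy')
        · exact Or.inr (Or.inl ⟨h2.1, h2.2.tail hzy'⟩)
        · exact Or.inr (Or.inr ⟨h3.1, h3.2.tail hzy'⟩)

lemma swap_acyclic : ∀ x, ¬ (U.swap p q).causal x x := by
  intro x hx
  rcases tau_causal hacyc hpq hqp hx with h1 | h2 | h3
  · cases x with
    | inl a =>
      by_cases hap : a = p
      · subst hap; rw [tau_inl, sw_left] at h1; exact hqp h1
      · by_cases haq : a = q
        · subst haq; rw [tau_inl, sw_right] at h1; exact hpq h1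
        · rw [tau_inl, sw_other hap haq] at h1; exact hacyc _ h1
    | inr t => exact hacyc _ h1
  · cases x with
    | inl a =>
      by_cases hap : a = p
      · subst hap; exact hqp h2.2
      · by_cases haq : a = q
        · subst haq; rw [tau_inl, sw_right] at h2; exact hacyc _ h2.1
        · rw [tau_inl, sw_other hap haq] at h2
          exact hqp (h2.2.trans h2.1)
    | inr t => exact hqp (h2.2.trans h2.1)
  · cases x with
    | inl a =>
      by_cases hap : a = p
      · subst hap; rw [tau_inl, sw_left] at h3; exact hacyc _ h3.1
      · by_cases haq : a = q
        · subst haq; exact hpq h3.2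
        · rw [tau_inl, sw_other hap haq] at h3
          exact hpq (h3.2.trans h3.1)
    | inr t => exact hpq (h3.2.trans h3.1)

lemma swap_not_causal_pq : ¬ (U.swap p q).causal (.inl p) (.inl q) := by
  intro h
  rcases tau_causal hacyc hpq hqp h with h1 | h2 | h3
  · rw [tau_inl, sw_left] at h1; exact hacyc _ h1
  · rw [tau_inl, sw_left] at h2; exact hqp h2.1
  · rw [tau_inl, sw_left] at h3; exact hacyc _ h3.1

lemma swap_not_causal_qp : ¬ (U.swap p q).causal (.inl q) (.inl p) := by
  intro h
  rcases tau_causal hacyc hpq hqp h with h1 | h2 | h3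
  · rw [tau_inl, sw_right] at h1; exact hacyc _ h1
  · rw [tau_inl, sw_right] at h2; exact hacyc _ h2.1
  · rw [tau_inl, sw_right] at h3; exact hpq h3.1

end Tau

end BDProofAux3
section BDProofAux4

open RawProc Set

variable {S T α β : Type*}

/-- a partial inverse -/
noncomputable def pinv {γ : Type*} (f : γ → γ) (s : Set γ) : γ → γ :=
  fun y => if h : ∃ x ∈ s, f x = y then h.choose else y

lemma pinv_mem {γ : Type*} {f : γ → γ} {s : Set γ} {y : γ} (h : ∃ x ∈ s, f x = y) :
    pinv f s y ∈ s := by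
  rw [pinv, dif_pos h]; exact h.choose_spec.1

lemma pinv_eq {γ : Type*} {f : γ → γ} {s : Set γ} {y : γ} (h : ∃ x ∈ s, f x = y) :
    f (pinv f s y) = y := by
  rw [pinv, dif_pos h]; exact h.choose_spec.2

lemma pinv_left {γ : Type*} {f : γ → γ} {s : Set γ} (hinj : Set.InjOn f s) {x : γ}
    (hx : x ∈ s) : pinv f s (f x) = x :=
  hinj (pinv_mem ⟨x, hx, rfl⟩) hx (pinv_eq ⟨x, hx, rfl⟩)

namespace RawProc

/-- normalisation: zero out flows outside the places/transitions -/
noncomputable def nrm (P : RawProc S T α β) : RawProc S T α β :=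
  { P with
    flowPT := fun x t => if x ∈ P.places ∧ t ∈ P.transitions then P.flowPT x t else 0
    flowTP := fun t x => if x ∈ P.places ∧ t ∈ P.transitions then P.flowTP t x else 0 }

@[simp] lemma nrm_places (P : RawProc S T α β) : P.nrm.places = P.places := rfl
@[simp] lemma nrm_transitions (P : RawProc S T α β) : P.nrm.transitions = P.transitions := rfl
@[simp] lemma nrm_initMark (P : RawProc S T α β) : P.nrm.initMark = P.initMark := rfl
@[simp] lemma nrm_projS (P : RawProc S T α β) : P.nrm.projS = P.projS := rfl
@[simp] lemma nrm_projT (P : RawProc S T α β) : P.nrm.projT = P.projT := rfl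

lemma nrm_flowPT_of_mem (P : RawProc S T α β) {x t} (hx : x ∈ P.places)
    (ht : t ∈ P.transitions) : P.nrm.flowPT x t = P.flowPT x t := by
  simp [nrm, hx, ht]

lemma nrm_flowTP_of_mem (P : RawProc S T α β) {x t} (hx : x ∈ P.places)
    (ht : t ∈ P.transitions) : P.nrm.flowTP t x = P.flowTP t x := by
  simp [nrm, hx, ht]

lemma nrm_nice (P : RawProc S T α β) : NiceDoms P.nrm := by
  constructor
  · intro x t h
    by_contra hc
    apply h
    simp only [nrm]
    rw [if_neg]
    intro ⟨h1, h2⟩; exact hc ⟨h1, h2⟩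
  · intro t x h
    by_contra hc
    apply h
    simp only [nrm]
    rw [if_neg]
    intro ⟨h1, h2⟩; exact hc ⟨h1, h2⟩

lemma nrm_eq_self {P : RawProc S T α β} (h : NiceDoms P) : P.nrm = P := by
  cases P with
  | mk pl tr fPT fTP im pS pT =>
    simp only [nrm]
    congr 1
    · funext x t
      split_ifs with hc
      · rfl
      · by_contra hne
        exact hc (h.1 x t fun h0 => hne h0.symm)
    · funext t x
      split_ifs with hc
      · rfl
      · by_contra hne
        exact hc (h.2 t x fun h0 => hne h0.symm)

lemma nrm_flowPT_ne (P : RawProc S T α β) {x t} (h : P.nrm.flowPT x t ≠ 0) :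
    P.flowPT x t ≠ 0 := fun h0 => h (by simp [nrm, h0])

lemma nrm_flowTP_ne (P : RawProc S T α β) {t x} (h : P.nrm.flowTP t x ≠ 0) :
    P.flowTP t x ≠ 0 := fun h0 => h (by simp [nrm, h0])

lemma nrm_flowRel_imp (P : RawProc S T α β) {u v} (h : P.nrm.flowRel u v) : P.flowRel u v := by
  cases u <;> cases v <;> simp only [flowRel] at h ⊢
  · exact P.nrm_flowPT_ne h
  · exact P.nrm_flowTP_ne h

/-- a swap step can be normalised on the right -/
lemma swapStep_nrm_right {U V : RawProc S T α β} (h : SwapStep U V) : SwapStep U V.nrm := by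
  obtain ⟨p, q, hp, hq, hproj, h1, h2, fS, fT, hbS, hbT, hflow, him, hpS, hpT⟩ := h
  refine ⟨p, q, hp, hq, hproj, h1, h2, fS, fT, hbS, hbT, ?_, him, hpS, hpT⟩
  intro x hx t ht
  have hxm : fS x ∈ V.places := hbS.mapsTo hx
  have htm : fT t ∈ V.transitions := hbT.mapsTo ht
  rw [nrm_flowPT_of_mem V hxm htm, nrm_flowTP_of_mem V hxm htm]
  exact hflow x hx t ht

/-- a swap step can be normalised on the left -/
lemma swapStep_nrm_left {U V : RawProc S T α β} (h : SwapStep U V) : SwapStep U.nrm V := by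
  obtain ⟨p, q, hp, hq, hproj, h1, h2, fS, fT, hbS, hbT, hflow, him, hpS, hpT⟩ := h
  refine ⟨p, q, hp, hq, hproj,
    fun hc => h1 (causal_mono (fun _ _ => U.nrm_flowRel_imp) hc),
    fun hc => h2 (causal_mono (fun _ _ => U.nrm_flowRel_imp) hc),
    fS, fT, hbS, hbT, ?_, him, hpS, hpT⟩
  intro x hx t ht
  have hsw : sw p q x ∈ U.places := by
    by_cases e1 : x = p
    · subst e1; simpa using hq
    · by_cases e2 : x = q
      · subst e2; simpa using hp
      · rwa [sw_other e1 e2]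
  have h1 := hflow x hx t ht
  rw [swap_flowPT, swap_flowTP] at h1 ⊢
  rw [nrm_flowPT_of_mem U hsw ht, nrm_flowTP_of_mem U hx ht]
  exact h1

lemma swapEquiv_nrm_left {X Z : RawProc S T α β} (h : SwapEquiv X Z) (hZ : NiceDoms Z) :
    SwapEquiv X.nrm Z := by
  induction h using Relation.ReflTransGen.head_induction_on with
  | refl => rw [nrm_eq_self hZ]; exact Relation.ReflTransGen.refl
  | head hs hchain _ => exact Relation.ReflTransGen.head (swapStep_nrm_left hs) hchain

lemma swapEquiv_nrm_right {X Z : RawProc S T α β} (h : SwapEquiv X Z) (hX : NiceDoms X) :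
    SwapEquiv X Z.nrm := by
  induction h with
  | refl => rw [nrm_eq_self hX]; exact Relation.ReflTransGen.refl
  | tail h1 hs _ => exact Relation.ReflTransGen.tail h1 (swapStep_nrm_right hs)

end RawProc

end BDProofAux4
section BDProofAux5

open RawProc Set

variable {S T α β : Type*}

lemma bundle_of_iso_nice {W V : RawProc S T α β} {fS : α → α} {fT : β → β}
    (hbS : Set.BijOn fS W.places V.places) (hbT : Set.BijOn fT W.transitions V.transitions)
    (hflow : ∀ p ∈ W.places, ∀ t ∈ W.transitions,
      V.flowPT (fS p) (fT t) = W.flowPT p t ∧ V.flowTP (fT t) (fS p) = W.flowTP t p)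
    (him : ∀ p ∈ W.places, V.initMark (fS p) = W.initMark p)
    (hpS : ∀ p ∈ W.places, V.projS (fS p) = W.projS p)
    (hpT : ∀ t ∈ W.transitions, V.projT (fT t) = W.projT t)
    (hVn : NiceDoms V) : Bundle fS fT W V := by
  refine ⟨hbS.injOn, hbT.injOn, fun x hx => hbS.mapsTo hx, fun t ht => hbT.mapsTo ht,
    fun x hx t ht => (hflow x hx t ht).1, fun x hx t ht => (hflow x hx t ht).2,
    him, hpS, hpT, ?_, ?_⟩
  · intro t ht b hb
    by_contra h0
    have := (hVn.1 b (fT t) h0).1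
    rw [← hbS.image_eq] at this
    exact hb this
  · intro x hx u hu
    have := (hVn.2 u (fS x) hu).2
    rw [← hbT.image_eq] at this
    exact this

lemma map_inj_reg {gS : α → α} {gT : β → β} {Y : RawProc S T α β}
    (hinjS : Set.InjOn gS Y.places) (hinjT : Set.InjOn gT Y.transitions) {v w : α ⊕ β}
    (hv : regMem Y v) (hw : regMem Y w) (h : Sum.map gS gT v = Sum.map gS gT w) : v = w := by
  cases v <;> cases w <;> simp only [Sum.map, Sum.elim, Function.comp] at h <;>
    first
      | (injection h with h0; exact congrArg _ (by first | exact hinjS hv hw h0 | exact hinjT hv hw h0))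
      | exact absurd h (by simp)

lemma acyclic_step {U V : RawProc S T α β} (hUa : ∀ x, ¬ U.causal x x) (h : SwapStep U V)
    (hVn : NiceDoms V) : ∀ x, ¬ V.causal x x := by
  obtain ⟨p, q, hp, hq, hproj, h1, h2, fS, fT, hbS, hbT, hflow, him, hpS, hpT⟩ := h
  have hWa : ∀ x, ¬ (U.swap p q).causal x x := swap_acyclic hUa h1 h2
  have B : Bundle fS fT (U.swap p q) V := bundle_of_iso_nice hbS hbT hflow him hpS hpT hVn
  intro x hx
  -- find an arc into x, to decode x as a region element
  have harc : ∃ z, V.flowRel z x := by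
    cases hx with
    | single h => exact ⟨_, h⟩
    | tail _ h => exact ⟨_, h⟩
  obtain ⟨z, hz⟩ := harc
  have hdec : ∃ w, regMem (U.swap p q) w ∧ x = Sum.map fS fT w := by
    cases x with
    | inl c =>
      cases z with
      | inl _ => exact absurd hz (by simp [RawProc.flowRel])
      | inr u =>
        have hc : c ∈ V.places := (hVn.2 u c hz).1
        rw [← hbS.image_eq] at hc
        obtain ⟨c₀, hc₀, rfl⟩ := hc
        exact ⟨.inl c₀, hc₀, rfl⟩
    | inr d =>
      cases z with
      | inr _ => exact absurd hz (by simp [RawProc.flowRel])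
      | inl e =>
        have hd : d ∈ V.transitions := (hVn.1 e d hz).2
        rw [← hbT.image_eq] at hd
        obtain ⟨d₀, hd₀, rfl⟩ := hd
        exact ⟨.inr d₀, hd₀, rfl⟩
  obtain ⟨w, hwmem, rfl⟩ := hdec
  obtain ⟨v, hveq, hvmem, hcaus⟩ := B.reflect hx hwmem
  have : v = w := map_inj_reg B.injS B.injT hvmem hwmem hveq.symm
  subst this
  exact hWa _ hcaus

lemma swapStep_symm {U V : RawProc S T α β} (h : SwapStep U V)
    (hUa : ∀ x, ¬ U.causal x x) (hVn : NiceDoms V) : SwapStep V U := by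
  obtain ⟨p, q, hp, hq, hproj, h1, h2, fS, fT, hbS, hbT, hflow, him, hpS, hpT⟩ := h
  have hWa : ∀ x, ¬ (U.swap p q).causal x x := swap_acyclic hUa h1 h2
  have hWpq : ¬ (U.swap p q).causal (.inl p) (.inl q) := swap_not_causal_pq hUa h1 h2
  have hWqp : ¬ (U.swap p q).causal (.inl q) (.inl p) := swap_not_causal_qp hUa h1 h2
  have B : Bundle fS fT (U.swap p q) V := bundle_of_iso_nice hbS hbT hflow him hpS hpT hVn
  set gS := pinv fS U.places with hgS
  set gT := pinv fT U.transitions with hgT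
  have hfg : ∀ y ∈ V.places, fS (gS y) = y := fun y hy => pinv_eq (hbS.surjOn hy)
  have hgmem : ∀ y ∈ V.places, gS y ∈ U.places := fun y hy => pinv_mem (hbS.surjOn hy)
  have hgf : ∀ x ∈ U.places, gS (fS x) = x := fun x hx => pinv_left hbS.injOn hx
  have hfgT : ∀ u ∈ V.transitions, fT (gT u) = u := fun u hu => pinv_eq (hbT.surjOn hu)
  have hgmemT : ∀ u ∈ V.transitions, gT u ∈ U.transitions := fun u hu => pinv_mem (hbT.surjOn hu)
  have hgfT : ∀ t ∈ U.transitions, gT (fT t) = t := fun t ht => pinv_left hbT.injOn ht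
  refine ⟨fS p, fS q, B.mapS p hp, B.mapS q hq, ?_, ?_, ?_, gS, gT, ?_, ?_, ?_, ?_, ?_, ?_⟩
  · rw [B.projS p hp, B.projS q hq]
    simpa using hproj
  · exact B.not_causal_of hp hq hWpq
  · exact B.not_causal_of hq hp hWqp
  · -- BijOn gS (V.swap _ _).places U.places
    refine ⟨fun y hy => hgmem y hy, ?_, ?_⟩
    · intro y1 h1' y2 h2' he
      rw [← hfg y1 h1', ← hfg y2 h2', he]
    · intro x hx
      exact ⟨fS x, hbS.mapsTo hx, hgf x hx⟩
  · refine ⟨fun u hu => hgmemT u hu, ?_, ?_⟩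
    · intro u1 h1' u2 h2' he
      rw [← hfgT u1 h1', ← hfgT u2 h2', he]
    · intro t ht
      exact ⟨fT t, hbT.mapsTo ht, hgfT t ht⟩
  · -- flows
    intro y hy u hu
    have hy' : y ∈ V.places := hy
    have hu' : u ∈ V.transitions := hu
    have hkey : sw (fS p) (fS q) y = fS (sw p q (gS y)) := by
      by_cases e1 : y = fS p
      · subst e1
        rw [sw_left, hgf p hp, sw_left]
      · by_cases e2 : y = fS q
        · subst e2
          rw [sw_right, hgf q hq, sw_right]
        · rw [sw_other e1 e2]
          have hgy : gS y ≠ p := fun h => e1 (by rw [← hfg y hy', h])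
          have hgy' : gS y ≠ q := fun h => e2 (by rw [← hfg y hy', h])
          rw [sw_other hgy hgy', hfg y hy']
    have hswmem : sw p q (gS y) ∈ U.places := by
      by_cases e1 : gS y = p
      · rw [e1, sw_left]; exact hq
      · by_cases e2 : gS y = q
        · rw [e2, sw_right]; exact hp
        · rw [sw_other e1 e2]; exact hgmem y hy'
    constructor
    · show U.flowPT (gS y) (gT u) = (V.swap (fS p) (fS q)).flowPT y u
      rw [swap_flowPT, hkey]
      have h5 := (hflow _ hswmem _ (hgmemT u hu')).1
      rw [hfgT u hu'] at h5
      rw [h5, swap_flowPT, sw_sw]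
    · show U.flowTP (gT u) (gS y) = (V.swap (fS p) (fS q)).flowTP u y
      rw [swap_flowTP]
      have := (hflow _ (hgmem y hy') _ (hgmemT u hu')).2
      rw [swap_flowTP] at this
      rw [← this, hfg y hy', hfgT u hu']
  · intro y hy
    have hy' : y ∈ V.places := hy
    have := B.initMark (gS y) (hgmem y hy')
    rw [hfg y hy'] at this
    rw [swap_initMark] at this ⊢
    exact this.symm
  · intro y hy
    have hy' : y ∈ V.places := hy
    have := B.projS (gS y) (hgmem y hy')
    rw [hfg y hy'] at this
    rw [swap_projS] at this ⊢
    exact this.symm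
  · intro u hu
    have hu' : u ∈ V.transitions := hu
    have := B.projT (gT u) (hgmemT u hu')
    rw [hfgT u hu'] at this
    rw [swap_projT] at this ⊢
    exact this.symm

end BDProofAux5
section BDProofAux6

open RawProc Set

variable {S T α β : Type*}

/-- a nice swap step -/
def NStep (A B : RawProc S T α β) : Prop := SwapStep A B ∧ NiceDoms A ∧ NiceDoms B

lemma toNChain {Y Z : RawProc S T α β} (h : SwapEquiv Y Z) :
    Relation.ReflTransGen NStep Y.nrm Z.nrm := by
  induction h with
  | refl => exact .refl
  | tail _ hs ih =>
    exact ih.tail ⟨RawProc.swapStep_nrm_right (RawProc.swapStep_nrm_left hs),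
      RawProc.nrm_nice _, RawProc.nrm_nice _⟩

lemma revN {Y Z : RawProc S T α β} (h : Relation.ReflTransGen NStep Y Z) :
    (∀ x, ¬ Y.causal x x) → SwapEquiv Z Y := by
  induction h using Relation.ReflTransGen.head_induction_on with
  | refl => intro _; exact .refl
  | head hs _hchain ih =>
    intro hYa
    obtain ⟨hstep, _hnY, hnC⟩ := hs
    have hca := acyclic_step hYa hstep hnC
    exact (ih hca).tail (swapStep_symm hstep hYa hnC)

lemma swapEquiv_symm_nice {X Z : RawProc S T α β} (h : SwapEquiv X Z) (hX : NiceDoms X)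
    (hXa : ∀ x, ¬ X.causal x x) (hZ : NiceDoms Z) : SwapEquiv Z X := by
  have h2 := toNChain h
  rw [RawProc.nrm_eq_self hX, RawProc.nrm_eq_self hZ] at h2
  exact revN h2 hXa

lemma iso_symm {P Q : RawProc S T α β} (h : RawProc.Iso P Q) : RawProc.Iso Q P := by
  obtain ⟨fS, fT, hbS, hbT, hflow, him, hpS, hpT⟩ := h
  set gS := pinv fS P.places
  set gT := pinv fT P.transitions
  have hfg : ∀ y ∈ Q.places, fS (gS y) = y := fun y hy => pinv_eq (hbS.surjOn hy)
  have hgmem : ∀ y ∈ Q.places, gS y ∈ P.places := fun y hy => pinv_mem (hbS.surjOn hy)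
  have hgf : ∀ x ∈ P.places, gS (fS x) = x := fun x hx => pinv_left hbS.injOn hx
  have hfgT : ∀ u ∈ Q.transitions, fT (gT u) = u := fun u hu => pinv_eq (hbT.surjOn hu)
  have hgmemT : ∀ u ∈ Q.transitions, gT u ∈ P.transitions := fun u hu => pinv_mem (hbT.surjOn hu)
  have hgfT : ∀ t ∈ P.transitions, gT (fT t) = t := fun t ht => pinv_left hbT.injOn ht
  refine ⟨gS, gT, ⟨fun y hy => hgmem y hy, fun y1 h1 y2 h2 he => by
      rw [← hfg y1 h1, ← hfg y2 h2, he], fun x hx => ⟨fS x, hbS.mapsTo hx, hgf x hx⟩⟩,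
    ⟨fun u hu => hgmemT u hu, fun u1 h1 u2 h2 he => by
      rw [← hfgT u1 h1, ← hfgT u2 h2, he], fun t ht => ⟨fT t, hbT.mapsTo ht, hgfT t ht⟩⟩,
    ?_, ?_, ?_, ?_⟩
  · intro y hy u hu
    have h5 := hflow (gS y) (hgmem y hy) (gT u) (hgmemT u hu)
    rw [hfg y hy, hfgT u hu] at h5
    exact ⟨h5.1.symm, h5.2.symm⟩
  · intro y hy
    have h5 := him (gS y) (hgmem y hy)
    rw [hfg y hy] at h5
    exact h5.symm
  · intro y hy
    have h5 := hpS (gS y) (hgmem y hy)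
    rw [hfg y hy] at h5
    exact h5.symm
  · intro u hu
    have h5 := hpT (gT u) (hgmemT u hu)
    rw [hfgT u hu] at h5
    exact h5.symm

lemma IsProcessOf.niceDoms {N : Net S T} {P : RawProc S T α β} (h : IsProcessOf N P) :
    NiceDoms P := ⟨h.flowPT_dom, h.flowTP_dom⟩

end BDProofAux6
section BDProofAux7

open RawProc Set

variable {S T α β : Type*} {N : Net S T}

/-- the local and counting invariants preserved along swapping chains -/
structure SemInv (N : Net S T) (U : RawProc S T α β) : Prop where
  preSub : ∀ x ∈ U.places, {t | t ∈ U.transitions ∧ U.flowTP t x ≠ 0}.Subsingleton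
  initOne : ∀ x ∈ U.places, (∀ t ∈ U.transitions, U.flowTP t x = 0) → U.initMark x = 1
  initZero : ∀ x ∈ U.places, ∀ t ∈ U.transitions, U.flowTP t x ≠ 0 → U.initMark x = 0
  preFin : ∀ t ∈ U.transitions, {x | x ∈ U.places ∧ U.flowPT x t ≠ 0}.Finite
  postFin : ∀ t ∈ U.transitions, {x | x ∈ U.places ∧ U.flowTP t x ≠ 0}.Finite
  preSum : ∀ t ∈ U.transitions, ∀ s,
    (∑ᶠ x ∈ {x | x ∈ U.places ∧ U.projS x = s}, U.flowPT x t) = N.pre (U.projT t) s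
  postSum : ∀ t ∈ U.transitions, ∀ s,
    (∑ᶠ x ∈ {x | x ∈ U.places ∧ U.projS x = s}, U.flowTP t x) = N.post (U.projT t) s

lemma sw_mem_places {U : RawProc S T α β} {p q : α} (hp : p ∈ U.places) (hq : q ∈ U.places)
    {x : α} (hx : x ∈ U.places) : sw p q x ∈ U.places := by
  by_cases e1 : x = p
  · rw [e1, sw_left]; exact hq
  · by_cases e2 : x = q
    · rw [e2, sw_right]; exact hp
    · rwa [sw_other e1 e2]

lemma sw_projS_eq {U : RawProc S T α β} {p q : α} (hproj : U.projS p = U.projS q) (x : α) :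
    U.projS (sw p q x) = U.projS x := by
  by_cases e1 : x = p
  · rw [e1, sw_left, hproj]
  · by_cases e2 : x = q
    · rw [e2, sw_right, hproj]
    · rw [sw_other e1 e2]

lemma semInv_swap {U : RawProc S T α β} (hI : SemInv N U) {p q : α} (hp : p ∈ U.places)
    (hq : q ∈ U.places) (hproj : U.projS p = U.projS q) : SemInv N (U.swap p q) := by
  have hswBij : ∀ (s : Set α), (∀ x ∈ s, sw p q x ∈ s) → Set.BijOn (sw p q) s s := by
    intro s hmap
    refine ⟨hmap, fun x _ y _ h => ?_, fun x hx => ⟨sw p q x, hmap x hx, by rw [sw_sw]⟩⟩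
    have := congrArg (sw p q) h
    rwa [sw_sw, sw_sw] at this
  constructor
  · intro x hx
    exact hI.preSub x hx
  · intro x hx h
    exact hI.initOne x hx h
  · intro x hx t ht h
    exact hI.initZero x hx t ht h
  · intro t ht
    have : {x | x ∈ (U.swap p q).places ∧ (U.swap p q).flowPT x t ≠ 0} =
        sw p q '' {x | x ∈ U.places ∧ U.flowPT x t ≠ 0} := by
      ext x
      constructor
      · rintro ⟨h1, h2⟩
        rw [swap_flowPT] at h2
        exact ⟨sw p q x, ⟨sw_mem_places hp hq h1, h2⟩, sw_sw p q x⟩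
      · rintro ⟨y, ⟨h1, h2⟩, rfl⟩
        refine ⟨sw_mem_places hp hq h1, ?_⟩
        rw [swap_flowPT, sw_sw]
        exact h2
    rw [this]
    exact (hI.preFin t ht).image _
  · intro t ht
    exact hI.postFin t ht
  · intro t ht s
    have h1 : (∑ᶠ x ∈ {x | x ∈ U.places ∧ U.projS x = s}, (U.swap p q).flowPT x t) =
        ∑ᶠ x ∈ {x | x ∈ U.places ∧ U.projS x = s}, U.flowPT x t := by
      refine finsum_mem_eq_of_bijOn (sw p q) (hswBij _ ?_) ?_
      · rintro x ⟨h1, h2⟩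
        exact ⟨sw_mem_places hp hq h1, by rw [sw_projS_eq hproj]; exact h2⟩
      · intro x _
        rw [swap_flowPT]
    exact h1.trans (hI.preSum t ht s)
  · intro t ht s
    exact hI.postSum t ht s

lemma semInv_iso {U V : RawProc S T α β} (hI : SemInv N U) (h : RawProc.Iso U V) : SemInv N V := by
  obtain ⟨fS, fT, hbS, hbT, hflow, him, hpS, hpT⟩ := h
  constructor
  · intro x' hx'
    obtain ⟨x, hx, rfl⟩ := hbS.surjOn hx'
    have : {t' | t' ∈ V.transitions ∧ V.flowTP t' (fS x) ≠ 0} =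
        fT '' {t | t ∈ U.transitions ∧ U.flowTP t x ≠ 0} := by
      ext t'
      constructor
      · rintro ⟨h1, h2⟩
        obtain ⟨t, ht, rfl⟩ := hbT.surjOn h1
        rw [(hflow x hx t ht).2] at h2
        exact ⟨t, ⟨ht, h2⟩, rfl⟩
      · rintro ⟨t, ⟨ht, h2⟩, rfl⟩
        exact ⟨hbT.mapsTo ht, by rw [(hflow x hx t ht).2]; exact h2⟩
    rw [this]
    exact ((hI.preSub x hx).image fT)
  · intro x' hx' hz
    obtain ⟨x, hx, rfl⟩ := hbS.surjOn hx'
    rw [him x hx]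
    refine hI.initOne x hx fun t ht => ?_
    have := hz (fT t) (hbT.mapsTo ht)
    rwa [(hflow x hx t ht).2] at this
  · intro x' hx' t' ht' hne
    obtain ⟨x, hx, rfl⟩ := hbS.surjOn hx'
    obtain ⟨t, ht, rfl⟩ := hbT.surjOn ht'
    rw [him x hx]
    rw [(hflow x hx t ht).2] at hne
    exact hI.initZero x hx t ht hne
  · intro t' ht'
    obtain ⟨t, ht, rfl⟩ := hbT.surjOn ht'
    have : {x | x ∈ V.places ∧ V.flowPT x (fT t) ≠ 0} =
        fS '' {x | x ∈ U.places ∧ U.flowPT x t ≠ 0} := by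
      ext x'
      constructor
      · rintro ⟨h1, h2⟩
        obtain ⟨x, hx, rfl⟩ := hbS.surjOn h1
        rw [(hflow x hx t ht).1] at h2
        exact ⟨x, ⟨hx, h2⟩, rfl⟩
      · rintro ⟨x, ⟨hx, h2⟩, rfl⟩
        exact ⟨hbS.mapsTo hx, by rw [(hflow x hx t ht).1]; exact h2⟩
    rw [this]
    exact (hI.preFin t ht).image _
  · intro t' ht'
    obtain ⟨t, ht, rfl⟩ := hbT.surjOn ht'
    have : {x | x ∈ V.places ∧ V.flowTP (fT t) x ≠ 0} =
        fS '' {x | x ∈ U.places ∧ U.flowTP t x ≠ 0} := by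
      ext x'
      constructor
      · rintro ⟨h1, h2⟩
        obtain ⟨x, hx, rfl⟩ := hbS.surjOn h1
        rw [(hflow x hx t ht).2] at h2
        exact ⟨x, ⟨hx, h2⟩, rfl⟩
      · rintro ⟨x, ⟨hx, h2⟩, rfl⟩
        exact ⟨hbS.mapsTo hx, by rw [(hflow x hx t ht).2]; exact h2⟩
    rw [this]
    exact (hI.postFin t ht).image _
  · intro t' ht' s
    obtain ⟨t, ht, rfl⟩ := hbT.surjOn ht'
    rw [hpT t ht]
    rw [← hI.preSum t ht s]
    refine (finsum_mem_eq_of_bijOn fS ?_ ?_).symm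
    · refine ⟨?_, hbS.injOn.mono (fun x hx => hx.1), ?_⟩
      · rintro x ⟨h1, h2⟩
        exact ⟨hbS.mapsTo h1, by rw [hpS x h1]; exact h2⟩
      · rintro x' ⟨h1, h2⟩
        obtain ⟨x, hx, rfl⟩ := hbS.surjOn h1
        exact ⟨x, ⟨hx, by rw [← hpS x hx]; exact h2⟩, rfl⟩
    · rintro x ⟨h1, _⟩
      exact ((hflow x h1 t ht).1).symm
  · intro t' ht' s
    obtain ⟨t, ht, rfl⟩ := hbT.surjOn ht'
    rw [hpT t ht]
    rw [← hI.postSum t ht s]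
    refine (finsum_mem_eq_of_bijOn fS ?_ ?_).symm
    · refine ⟨?_, hbS.injOn.mono (fun x hx => hx.1), ?_⟩
      · rintro x ⟨h1, h2⟩
        exact ⟨hbS.mapsTo h1, by rw [hpS x h1]; exact h2⟩
      · rintro x' ⟨h1, h2⟩
        obtain ⟨x, hx, rfl⟩ := hbS.surjOn h1
        exact ⟨x, ⟨hx, by rw [← hpS x hx]; exact h2⟩, rfl⟩
    · rintro x ⟨h1, _⟩
      exact ((hflow x h1 t ht).2).symm

lemma semInv_swapStep_fwd {U V : RawProc S T α β} (hI : SemInv N U) (h : SwapStep U V) : SemInv N V := by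
  obtain ⟨p, q, hp, hq, hproj, _, _, hiso⟩ := h
  exact semInv_iso (semInv_swap hI hp hq hproj) hiso

lemma semInv_swapStep_bwd {U V : RawProc S T α β} (hI : SemInv N V) (h : SwapStep U V) : SemInv N U := by
  obtain ⟨p, q, hp, hq, hproj, _, _, hiso⟩ := h
  have h2 : SemInv N (U.swap p q) := semInv_iso hI (iso_symm hiso)
  have h3 : SemInv N ((U.swap p q).swap p q) := by
    refine semInv_swap h2 ?_ ?_ ?_
    · simpa using hp
    · simpa using hq
    · simpa using hproj
  rwa [RawProc.swap_swap] at h3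

lemma semInv_swapEquiv_fwd {U V : RawProc S T α β} (hI : SemInv N U) (h : RawProc.SwapEquiv U V) :
    SemInv N V := by
  induction h with
  | refl => exact hI
  | tail _ hs ih => exact semInv_swapStep_fwd ih hs

lemma semInv_swapEquiv_bwd {U V : RawProc S T α β} (hI : SemInv N V) (h : RawProc.SwapEquiv U V) :
    SemInv N U := by
  induction h using Relation.ReflTransGen.head_induction_on with
  | refl => exact hI
  | head hs _ ih => exact semInv_swapStep_bwd ih hs

lemma semInv_nrm {U : RawProc S T α β} (hI : SemInv N U) : SemInv N U.nrm := by
  constructor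
  · intro x hx
    have : {t | t ∈ U.nrm.transitions ∧ U.nrm.flowTP t x ≠ 0} ⊆
        {t | t ∈ U.transitions ∧ U.flowTP t x ≠ 0} :=
      fun t ⟨h1, h2⟩ => ⟨h1, U.nrm_flowTP_ne h2⟩
    exact (hI.preSub x hx).anti this
  · intro x hx h
    refine hI.initOne x hx fun t ht => ?_
    have := h t ht
    rwa [U.nrm_flowTP_of_mem hx ht] at this
  · intro x hx t ht h
    rw [U.nrm_flowTP_of_mem hx ht] at h
    exact hI.initZero x hx t ht h
  · intro t ht
    refine (hI.preFin t ht).subset fun x ⟨h1, h2⟩ => ⟨h1, ?_⟩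
    rwa [U.nrm_flowPT_of_mem h1 ht] at h2
  · intro t ht
    refine (hI.postFin t ht).subset fun x ⟨h1, h2⟩ => ⟨h1, ?_⟩
    rwa [U.nrm_flowTP_of_mem h1 ht] at h2
  · intro t ht s
    show (∑ᶠ x ∈ {x | x ∈ U.places ∧ U.projS x = s}, U.nrm.flowPT x t) = N.pre (U.projT t) s
    rw [← hI.preSum t ht s]
    exact finsum_mem_congr rfl fun x hx => U.nrm_flowPT_of_mem hx.1 ht
  · intro t ht s
    show (∑ᶠ x ∈ {x | x ∈ U.places ∧ U.projS x = s}, U.nrm.flowTP t x) = N.post (U.projT t) s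
    rw [← hI.postSum t ht s]
    exact finsum_mem_congr rfl fun x hx => U.nrm_flowTP_of_mem hx.1 ht

lemma semInv_of_processOf {P : RawProc S T α β} (h : IsProcessOf N P) : SemInv N P := by
  constructor
  · intro x hx
    exact (h.pre_place x hx).1.anti fun t ⟨_, h2⟩ => h2
  · intro x hx hz
    refine h.init_one x hx fun t => ?_
    by_contra hne
    exact hne (hz t (h.flowTP_dom t x hne).2)
  · intro x hx t _ hne
    exact h.init_zero x hx ⟨t, hne⟩
  · intro t ht
    exact (h.t_pre_fin t ht).subset fun x ⟨_, h2⟩ => h2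
  · intro t ht
    exact (h.t_post_fin t ht).subset fun x ⟨_, h2⟩ => h2
  · intro t ht s
    rw [← h.proj_pre t ht s]
    refine finsum_mem_inter_support_eq _ _ _ ?_
    ext x
    simp only [Set.mem_inter_iff, Set.mem_setOf_eq, Function.mem_support]
    constructor
    · rintro ⟨⟨_, h2⟩, h3⟩; exact ⟨h2, h3⟩
    · rintro ⟨h2, h3⟩; exact ⟨⟨(h.flowPT_dom x t h3).1, h2⟩, h3⟩
  · intro t ht s
    rw [← h.proj_post t ht s]
    refine finsum_mem_inter_support_eq _ _ _ ?_
    ext x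
    simp only [Set.mem_inter_iff, Set.mem_setOf_eq, Function.mem_support]
    constructor
    · rintro ⟨⟨_, h2⟩, h3⟩; exact ⟨h2, h3⟩
    · rintro ⟨h2, h3⟩; exact ⟨⟨(h.flowTP_dom t x h3).1, h2⟩, h3⟩

end BDProofAux7
section BDProofAux8

open RawProc Set

variable {S T α β : Type*} {N : Net S T}

lemma sum_extract_zero {A : Type*} {f : A → ℕ} {s t : Set A} (hst : s ⊆ t)
    (hs : (s ∩ Function.support f).Finite) (ht : (t ∩ Function.support f).Finite)
    (heq : (∑ᶠ x ∈ s, f x) = ∑ᶠ x ∈ t, f x) {b : A} (hb : b ∈ t) (hbs : b ∉ s) : f b = 0 := by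
  have hd : Disjoint s (t \ s) := Set.disjoint_sdiff_right.mono_left le_rfl
  have hts : (t \ s) ∩ Function.support f ⊆ t ∩ Function.support f :=
    fun x ⟨h1, h2⟩ => ⟨h1.1, h2⟩
  have htfin : ((t \ s) ∩ Function.support f).Finite := ht.subset hts
  have hsplit : (∑ᶠ x ∈ t, f x) = (∑ᶠ x ∈ s, f x) + ∑ᶠ x ∈ t \ s, f x := by
    have h0 := finsum_mem_union' hd hs htfin
    rwa [Set.union_diff_cancel hst] at h0
  have hzero : (∑ᶠ x ∈ t \ s, f x) = 0 := by omega
  by_contra hne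
  rw [finsum_mem_eq_sum f htfin] at hzero
  have hbmem : b ∈ htfin.toFinset := by
    rw [Set.Finite.mem_toFinset]
    exact ⟨⟨hb, hbs⟩, hne⟩
  exact hne (Finset.sum_eq_zero_iff.mp hzero b hbmem)

/-- an honest prefix pair gives a bundle along the identity -/
lemma bundle_init {P₂ Q₂ : RawProc S T α β} (hpre : RawProc.IsPrefix P₂ Q₂)
    (hIP : SemInv N P₂) (hIQ : SemInv N Q₂) (hQn : NiceDoms Q₂) :
    Bundle id id P₂ Q₂ := by
  obtain ⟨hpl, htr, him, hflows, hpS, hpT⟩ := hpre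
  constructor
  · exact Set.injOn_id _
  · exact Set.injOn_id _
  · exact fun x hx => hpl hx
  · exact fun t ht => htr ht
  · exact fun x hx t ht => ((hflows x hx t ht).1).symm
  · exact fun x hx t ht => ((hflows x hx t ht).2).symm
  · exact fun x _ => (congrFun him x).symm
  · exact fun x hx => (hpS x hx).symm
  · exact fun t ht => (hpT t ht).symm
  · -- fullness
    intro t ht c hc
    rw [Set.image_id] at hc
    show Q₂.flowPT c t = 0
    by_cases hcq : c ∈ Q₂.places
    · set s₀ := Q₂.projS c with hs₀
      have hsub : {x | x ∈ P₂.places ∧ P₂.projS x = s₀} ⊆ {x | x ∈ Q₂.places ∧ Q₂.projS x = s₀} := by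
        rintro x ⟨h1, h2⟩
        exact ⟨hpl h1, by rw [← hpS x h1]; exact h2⟩
      have hfinP : ({x | x ∈ P₂.places ∧ P₂.projS x = s₀} ∩
          Function.support fun x => Q₂.flowPT x t).Finite := by
        refine (hIQ.preFin t (htr ht)).subset ?_
        rintro x ⟨⟨h1, _⟩, h2⟩
        exact ⟨hpl h1, h2⟩
      have hfinQ : ({x | x ∈ Q₂.places ∧ Q₂.projS x = s₀} ∩
          Function.support fun x => Q₂.flowPT x t).Finite := by
        refine (hIQ.preFin t (htr ht)).subset ?_
        rintro x ⟨⟨h1, _⟩, h2⟩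
        exact ⟨h1, h2⟩
      have heq : (∑ᶠ x ∈ {x | x ∈ P₂.places ∧ P₂.projS x = s₀}, Q₂.flowPT x t) =
          ∑ᶠ x ∈ {x | x ∈ Q₂.places ∧ Q₂.projS x = s₀}, Q₂.flowPT x t := by
        have e1 : (∑ᶠ x ∈ {x | x ∈ P₂.places ∧ P₂.projS x = s₀}, Q₂.flowPT x t) =
            ∑ᶠ x ∈ {x | x ∈ P₂.places ∧ P₂.projS x = s₀}, P₂.flowPT x t :=
          finsum_mem_congr rfl fun x hx => ((hflows x hx.1 t ht).1).symm
        rw [e1, hIP.preSum t ht s₀, hIQ.preSum t (htr ht) s₀, hpT t ht]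
      have := sum_extract_zero hsub hfinP hfinQ heq (b := c) ⟨hcq, rfl⟩ ?_
      · exact this
      · rintro ⟨h1, _⟩
        exact hc h1
    · by_contra hne
      exact hcq (hQn.1 c t hne).1
  · -- producer closedness
    intro x hx u hu
    rw [Set.image_id]
    have hut : u ∈ Q₂.transitions := (hQn.2 u x hu).2
    have hmark : Q₂.initMark x = 0 := hIQ.initZero x (hpl hx) u hut hu
    have hmarkP : P₂.initMark x = 0 := by rw [congrFun him x]; exact hmark
    have hexists : ∃ u' ∈ P₂.transitions, P₂.flowTP u' x ≠ 0 := by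
      by_contra hno
      push_neg at hno
      have := hIP.initOne x hx fun t' ht' => hno t' ht'
      omega
    obtain ⟨u', hu', hne'⟩ := hexists
    have hQne : Q₂.flowTP u' x ≠ 0 := by
      rw [← (hflows x hx u' hu').2]
      exact hne'
    have := hIQ.preSub x (hpl hx) ⟨hut, hu⟩ ⟨htr hu', hQne⟩
    rwa [this]

/-- the key backward lifting step -/
lemma bz_step {Y Y₁ G₁ : RawProc S T α β} {gS : α → α} {gT : β → β} (hs : SwapStep Y Y₁)
    (B1 : Bundle gS gT Y₁ G₁) :
    ∃ gS' gT' G₀, Bundle gS' gT' Y G₀ ∧ SwapStep G₀ G₁ := by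
  obtain ⟨a, b, ha, hb, hproj, h1, h2, fS, fT, hbS, hbT, hflow, him, hpS, hpT⟩ := hs
  have hbS' : Set.BijOn fS Y.places Y₁.places := hbS
  have hbT' : Set.BijOn fT Y.transitions Y₁.transitions := hbT
  set gS' : α → α := gS ∘ fS with hgS'
  set gT' : β → β := gT ∘ fT with hgT'
  set a' := gS' a with ha'
  set b' := gS' b with hb'
  set G₀ := G₁.swap a' b' with hG₀
  have hreg : gS' '' Y.places = gS '' Y₁.places := by
    rw [hgS', Set.image_comp, hbS'.image_eq]
  have hregT : gT' '' Y.transitions = gT '' Y₁.transitions := by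
    rw [hgT', Set.image_comp, hbT'.image_eq]
  have hinjS : Set.InjOn gS' Y.places := B1.injS.comp hbS'.injOn hbS'.mapsTo
  have hinjT : Set.InjOn gT' Y.transitions := B1.injT.comp hbT'.injOn hbT'.mapsTo
  have hswmem : ∀ x ∈ Y.places, sw a b x ∈ Y.places := fun x hx => sw_mem_places ha hb hx
  have hkey : ∀ x ∈ Y.places, sw a' b' (gS' x) = gS' (sw a b x) := by
    intro x hx
    by_cases e1 : x = a
    · subst e1; rw [sw_left, sw_left]
    · by_cases e2 : x = b
      · subst e2; rw [sw_right, sw_right]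
      · have n1 : gS' x ≠ a' := fun h => e1 (hinjS hx ha h)
        have n2 : gS' x ≠ b' := fun h => e2 (hinjS hx hb h)
        rw [sw_other n1 n2, sw_other e1 e2]
  have B0 : Bundle gS' gT' Y G₀ := by
    constructor
    · exact hinjS
    · exact hinjT
    · intro x hx
      exact B1.mapS (fS x) (hbS'.mapsTo hx)
    · intro t ht
      exact B1.mapT (fT t) (hbT'.mapsTo ht)
    · intro x hx t ht
      show (G₁.swap a' b').flowPT (gS' x) (gT' t) = Y.flowPT x t
      rw [swap_flowPT, hkey x hx]
      have e1 : G₁.flowPT (gS' (sw a b x)) (gT' t) = Y₁.flowPT (fS (sw a b x)) (fT t) :=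
        B1.flowPT _ (hbS'.mapsTo (hswmem x hx)) _ (hbT'.mapsTo ht)
      rw [e1, (hflow (sw a b x) (hswmem x hx) t ht).1, swap_flowPT, sw_sw]
    · intro x hx t ht
      show G₁.flowTP (gT' t) (gS' x) = Y.flowTP t x
      rw [show G₁.flowTP (gT' t) (gS' x) = Y₁.flowTP (fT t) (fS x) from
        B1.flowTP _ (hbS'.mapsTo hx) _ (hbT'.mapsTo ht),
        (hflow x hx t ht).2, swap_flowTP]
    · intro x hx
      show G₁.initMark (gS' x) = Y.initMark x
      rw [show G₁.initMark (gS' x) = Y₁.initMark (fS x) from B1.initMark _ (hbS'.mapsTo hx),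
        him x hx, swap_initMark]
    · intro x hx
      show G₁.projS (gS' x) = Y.projS x
      rw [show G₁.projS (gS' x) = Y₁.projS (fS x) from B1.projS _ (hbS'.mapsTo hx),
        hpS x hx, swap_projS]
    · intro t ht
      show G₁.projT (gT' t) = Y.projT t
      rw [show G₁.projT (gT' t) = Y₁.projT (fT t) from B1.projT _ (hbT'.mapsTo ht),
        hpT t ht, swap_projT]
    · intro t ht c hc
      show (G₁.swap a' b').flowPT c (gT' t) = 0
      have n1 : c ≠ a' := fun h => hc (h ▸ ⟨a, ha, rfl⟩)
      have n2 : c ≠ b' := fun h => hc (h ▸ ⟨b, hb, rfl⟩)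
      rw [swap_flowPT, sw_other n1 n2]
      refine B1.full (fT t) (hbT'.mapsTo ht) c ?_
      rw [← hreg]
      exact hc
    · intro x hx u hu
      show u ∈ gT' '' Y.transitions
      rw [hregT]
      exact B1.prodc (fS x) (hbS'.mapsTo hx) u hu
  refine ⟨gS', gT', G₀, B0, a', b', ?_, ?_, ?_, ?_, ?_, ?_⟩
  · exact B1.mapS (fS a) (hbS'.mapsTo ha)
  · exact B1.mapS (fS b) (hbS'.mapsTo hb)
  · show G₀.projS a' = G₀.projS b'
    have e1 : G₀.projS a' = Y.projS a := B0.projS a ha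
    have e2 : G₀.projS b' = Y.projS b := B0.projS b hb
    rw [e1, e2, hproj]
  · exact B0.not_causal_of ha hb h1
  · exact B0.not_causal_of hb ha h2
  · rw [hG₀, RawProc.swap_swap]
    exact RawProc.iso_rfl G₁

lemma bz_chain {Y Z : RawProc S T α β} (h : RawProc.SwapEquiv Y Z) :
    ∀ {gS gT G}, Bundle gS gT Z G →
      ∃ (gS' : α → α) (gT' : β → β) (G' : RawProc S T α β),
        Bundle gS' gT' Y G' ∧ RawProc.SwapEquiv G' G := by
  induction h using Relation.ReflTransGen.head_induction_on with
  | refl => exact fun B => ⟨_, _, _, B, Relation.ReflTransGen.refl⟩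
  | head hs _ ih =>
    intro gS gT G B
    obtain ⟨g1, g2, G1, B1, hequiv⟩ := ih B
    obtain ⟨g1', g2', G0, B0, hstep⟩ := bz_step hs B1
    exact ⟨g1', g2', G0, B0, Relation.ReflTransGen.head hstep hequiv⟩

end BDProofAux8
section BDProofAux9

open RawProc Set

variable {S T α β : Type*} {N : Net S T}

lemma finsum_mem_zero_term {A : Type*} {f : A → ℕ} {s : Set A}
    (hfin : (s ∩ Function.support f).Finite) (h : (∑ᶠ x ∈ s, f x) = 0) {b : A} (hb : b ∈ s) :
    f b = 0 := by
  by_contra hne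
  rw [finsum_mem_eq_sum f hfin] at h
  exact hne (Finset.sum_eq_zero_iff.mp h b (by rw [Set.Finite.mem_toFinset]; exact ⟨hb, hne⟩))

lemma prefix_nrm {X Y : RawProc S T α β} (h : RawProc.IsPrefix X Y) :
    RawProc.IsPrefix X.nrm Y.nrm := by
  obtain ⟨hpl, htr, him, hflows, hpS, hpT⟩ := h
  refine ⟨hpl, htr, him, ?_, hpS, hpT⟩
  intro p hp t ht
  rw [X.nrm_flowPT_of_mem hp ht, X.nrm_flowTP_of_mem hp ht,
    Y.nrm_flowPT_of_mem (hpl hp) (htr ht), Y.nrm_flowTP_of_mem (hpl hp) (htr ht)]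
  exact hflows p hp t ht

/-- honest processes on an empty carrier of places are trivially prefixes of everything -/
lemma prefix_of_empty {A C : RawProc S T α β} (hA : IsProcessOf N A) (hC : IsProcessOf N C)
    (hAe : A.places = ∅) : RawProc.IsPrefix A C := by
  have hAtr : A.transitions = ∅ := by
    ext t
    simp only [Set.mem_empty_iff_false, iff_false]
    intro ht
    obtain ⟨p, hp⟩ := hA.t_pre_ne t ht
    have := (hA.flowPT_dom p t hp).1
    rw [hAe] at this
    exact this
  have hAim : ∀ p, A.initMark p = 0 := by
    intro p
    by_contra hne
    have := hA.initMark_dom p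
    rw [hAe] at this
    exact hne (this (fun h => h))
  have hM0 : ∀ s, N.M0 s = 0 := by
    intro s
    rw [← hA.proj_init s]
    exact finsum_mem_of_eqOn_zero fun p _ => hAim p
  have hCim : ∀ p, C.initMark p = 0 := by
    intro p
    by_cases hp : p ∈ C.places
    · have hfin : ({q | C.projS q = C.projS p} ∩ Function.support C.initMark).Finite := by
        refine (hC.proj_init_fin (C.projS p)).subset ?_
        rintro q ⟨h1, h2⟩
        exact ⟨h1, h2⟩
      refine finsum_mem_zero_term hfin ?_ (by simp : p ∈ {q | C.projS q = C.projS p})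
      rw [hC.proj_init (C.projS p)]
      exact hM0 _
    · exact hC.initMark_dom p hp
  refine ⟨by rw [hAe]; exact Set.empty_subset _, by rw [hAtr]; exact Set.empty_subset _,
    funext fun p => (hAim p).trans (hCim p).symm, ?_, ?_, ?_⟩
  · intro p hp
    rw [hAe] at hp
    exact absurd hp (Set.notMem_empty p)
  · intro p hp
    rw [hAe] at hp
    exact absurd hp (Set.notMem_empty p)
  · intro t ht
    rw [hAtr] at ht
    exact absurd ht (Set.notMem_empty t)

/-- transitivity of the lifted prefix relation -/
lemma bdRunLE_trans {x y z : PartialBDRun N α β} (h1 : bdRunLE N x y) (h2 : bdRunLE N y z) :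
    bdRunLE N x z := by
  obtain ⟨A, B, hAx, hBy, P₁, Q₁, hA1, hpre1, hQ1B⟩ := h1
  obtain ⟨B', C, hB'y, hCz, P₂, Q₂, hB'2, hpre2, hQ2C⟩ := h2
  -- the two representatives of y are swapping equivalent
  have hBB' : RawProc.SwapEquiv B.1 B'.1 := by
    have heq : Quot.mk _ B = Quot.mk _ B' :=
      (hBy.trans hB'y.symm : bdClass N B = bdClass N B')
    have hequiv : Equivalence (fun P Q : FinProcOf N α β => RawProc.SwapEquiv P.1 Q.1) := by
      refine ⟨fun _ => Relation.ReflTransGen.refl, ?_, fun h h' => h.trans h'⟩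
      intro P Q h
      exact swapEquiv_symm_nice h P.2.1.niceDoms P.2.1.acyclic Q.2.1.niceDoms
    exact hequiv.eqvGen_iff.mp (Quot.eq.mp heq)
  -- the degenerate case of an empty process
  by_cases hAe : A.1.places = ∅
  · exact ⟨A, C, hAx, hCz, A.1, C.1, Relation.ReflTransGen.refl,
      prefix_of_empty A.2.1 C.2.1 hAe, Relation.ReflTransGen.refl⟩
  -- normalised data on the right pair
  have hch2 : RawProc.SwapEquiv B'.1 P₂.nrm := RawProc.swapEquiv_nrm_right hB'2 B'.2.1.niceDoms
  have hpre2' : RawProc.IsPrefix P₂.nrm Q₂.nrm := prefix_nrm hpre2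
  have hQch : RawProc.SwapEquiv Q₂.nrm C.1 := RawProc.swapEquiv_nrm_left hQ2C C.2.1.niceDoms
  have hIP2 : SemInv N P₂.nrm :=
    semInv_nrm (semInv_swapEquiv_fwd (semInv_of_processOf B'.2.1) hB'2)
  have hIQ2 : SemInv N Q₂.nrm :=
    semInv_nrm (semInv_swapEquiv_bwd (semInv_of_processOf C.2.1) hQ2C)
  have B0 : Bundle id id P₂.nrm Q₂.nrm := bundle_init hpre2' hIP2 hIQ2 (RawProc.nrm_nice Q₂)
  -- lift the bundle backwards along the composite chain
  have hbig : RawProc.SwapEquiv Q₁ P₂.nrm := (hQ1B.trans hBB').trans hch2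
  obtain ⟨gS, gT, G', BG, hGQ⟩ := bz_chain hbig B0
  have hGC : RawProc.SwapEquiv G' C.1 := hGQ.trans hQch
  -- extract the image of P₁ inside G'
  obtain ⟨hpl1, htr1, him1, hflows1, hpS1, hpT1⟩ := hpre1
  set P₃ : RawProc S T α β :=
    { places := gS '' P₁.places
      transitions := gT '' P₁.transitions
      flowPT := fun xx tt =>
        if xx ∈ gS '' P₁.places ∧ tt ∈ gT '' P₁.transitions then G'.flowPT xx tt else 0
      flowTP := fun tt xx =>
        if xx ∈ gS '' P₁.places ∧ tt ∈ gT '' P₁.transitions then G'.flowTP tt xx else 0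
      initMark := G'.initMark
      projS := G'.projS
      projT := G'.projT } with hP₃
  have hpre3 : RawProc.IsPrefix P₃ G' := by
    refine ⟨?_, ?_, rfl, ?_, fun p _ => rfl, fun t _ => rfl⟩
    · rintro p ⟨x, hx, rfl⟩
      exact BG.mapS x (hpl1 hx)
    · rintro t ⟨u, hu, rfl⟩
      exact BG.mapT u (htr1 hu)
    · intro p hp t ht
      constructor
      · show (if _ ∧ _ then G'.flowPT p t else 0) = G'.flowPT p t
        rw [if_pos ⟨hp, ht⟩]
      · show (if _ ∧ _ then G'.flowTP t p else 0) = G'.flowTP t p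
        rw [if_pos ⟨hp, ht⟩]
  have hiso : RawProc.Iso P₁ P₃ := by
    refine ⟨gS, gT, ?_, ?_, ?_, ?_, ?_, ?_⟩
    · exact (BG.injS.mono hpl1).bijOn_image
    · exact (BG.injT.mono htr1).bijOn_image
    · intro p hp t ht
      have hm : gS p ∈ gS '' P₁.places := ⟨p, hp, rfl⟩
      have hm' : gT t ∈ gT '' P₁.transitions := ⟨t, ht, rfl⟩
      constructor
      · show (if _ ∧ _ then G'.flowPT (gS p) (gT t) else 0) = P₁.flowPT p t
        rw [if_pos ⟨hm, hm'⟩, BG.flowPT p (hpl1 hp) t (htr1 ht), (hflows1 p hp t ht).1]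
      · show (if _ ∧ _ then G'.flowTP (gT t) (gS p) else 0) = P₁.flowTP t p
        rw [if_pos ⟨hm, hm'⟩, BG.flowTP p (hpl1 hp) t (htr1 ht), (hflows1 p hp t ht).2]
    · intro p hp
      show G'.initMark (gS p) = P₁.initMark p
      rw [BG.initMark p (hpl1 hp), ← congrFun him1 p]
    · intro p hp
      show G'.projS (gS p) = P₁.projS p
      rw [BG.projS p (hpl1 hp), hpS1 p hp]
    · intro t ht
      show G'.projT (gT t) = P₁.projT t
      rw [BG.projT t (htr1 ht), hpT1 t ht]
  -- A is swapping equivalent to P₃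
  have hA3 : RawProc.SwapEquiv A.1 P₃ := by
    rcases (Relation.ReflTransGen.cases_tail hA1) with heq | ⟨c, hchain, hstep⟩
    · -- P₁ = A.1
      obtain ⟨p₀, hp₀⟩ := Set.nonempty_iff_ne_empty.mpr hAe
      have hiso' : RawProc.Iso A.1 P₃ := heq ▸ hiso
      refine Relation.ReflTransGen.single ⟨p₀, p₀, hp₀, hp₀, rfl, A.2.1.acyclic _,
        A.2.1.acyclic _, ?_⟩
      rw [RawProc.swap_self]
      exact hiso'
    · exact Relation.ReflTransGen.tail hchain (hstep.iso_comp hiso)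
  exact ⟨A, C, hAx, hCz, P₃, G', hA3, hpre3, hGC⟩

end BDProofAux9
section BDProofAux10

open RawProc Set

variable {S T α β : Type*} {N : Net S T}

lemma prefix_refl (X : RawProc S T α β) : RawProc.IsPrefix X X :=
  ⟨subset_rfl, subset_rfl, rfl, fun _ _ _ _ => ⟨rfl, rfl⟩, fun _ _ => rfl, fun _ _ => rfl⟩

lemma prefix_flowPT_full {Q P : RawProc S T α β} (hIQ : SemInv N Q) (hIP : SemInv N P)
    (hPn : NiceDoms P) (hQn : NiceDoms Q) (hpre : RawProc.IsPrefix Q P) :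
    ∀ t ∈ Q.transitions, ∀ b, Q.flowPT b t = P.flowPT b t := by
  intro t ht b
  by_cases hb : b ∈ Q.places
  · exact (hpre.2.2.2.1 b hb t ht).1
  · have hq0 : Q.flowPT b t = 0 := by
      by_contra hne
      exact hb (hQn.1 b t hne).1
    rw [hq0]
    have := (bundle_init hpre hIQ hIP hPn).full t ht b (by rwa [Set.image_id])
    exact this.symm

lemma prefix_flowTP_full {Q P : RawProc S T α β} (hIQ : SemInv N Q) (hIP : SemInv N P)
    (hPn : NiceDoms P) (hQn : NiceDoms Q) (hpre : RawProc.IsPrefix Q P) :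
    ∀ t ∈ Q.transitions, ∀ b, Q.flowTP t b = P.flowTP t b := by
  obtain ⟨hpl, htr, him, hflows, hpS, hpT⟩ := hpre
  intro t ht b
  by_cases hb : b ∈ Q.places
  · exact (hflows b hb t ht).2
  · have hq0 : Q.flowTP t b = 0 := by
      by_contra hne
      exact hb (hQn.2 t b hne).1
    rw [hq0]
    by_cases hbP : b ∈ P.places
    · set s₀ := P.projS b with hs₀
      have hsub : {x | x ∈ Q.places ∧ Q.projS x = s₀} ⊆ {x | x ∈ P.places ∧ P.projS x = s₀} := by
        rintro x ⟨hx1, hx2⟩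
        exact ⟨hpl hx1, by rw [← hpS x hx1]; exact hx2⟩
      have hfinQ : ({x | x ∈ Q.places ∧ Q.projS x = s₀} ∩
          Function.support fun x => P.flowTP t x).Finite := by
        refine (hIP.postFin t (htr ht)).subset ?_
        rintro x ⟨⟨hx1, _⟩, hx2⟩
        exact ⟨hpl hx1, hx2⟩
      have hfinP : ({x | x ∈ P.places ∧ P.projS x = s₀} ∩
          Function.support fun x => P.flowTP t x).Finite := by
        refine (hIP.postFin t (htr ht)).subset ?_
        rintro x ⟨⟨hx1, _⟩, hx2⟩
        exact ⟨hx1, hx2⟩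
      have heq : (∑ᶠ x ∈ {x | x ∈ Q.places ∧ Q.projS x = s₀}, P.flowTP t x) =
          ∑ᶠ x ∈ {x | x ∈ P.places ∧ P.projS x = s₀}, P.flowTP t x := by
        have e1 : (∑ᶠ x ∈ {x | x ∈ Q.places ∧ Q.projS x = s₀}, P.flowTP t x) =
            ∑ᶠ x ∈ {x | x ∈ Q.places ∧ Q.projS x = s₀}, Q.flowTP t x :=
          finsum_mem_congr rfl fun x hx => ((hflows x hx.1 t ht).2).symm
        rw [e1, hIQ.postSum t ht s₀, hIP.postSum t (htr ht) s₀, hpT t ht]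
      exact (sum_extract_zero hsub hfinQ hfinP heq ⟨hbP, rfl⟩ (fun h => hb h.1)).symm
    · symm
      by_contra hne
      exact hbP (hPn.2 t b hne).1

/-- union of two finite prefixes of an honest process -/
lemma union_prefix {P : RawProc S T α β} (hP : IsProcessOf N P) (Q₁ Q₂ : FinProcOf N α β)
    (h1 : RawProc.IsPrefix Q₁.1 P) (h2 : RawProc.IsPrefix Q₂.1 P) :
    ∃ R : FinProcOf N α β, RawProc.IsPrefix R.1 P ∧ RawProc.IsPrefix Q₁.1 R.1 ∧
      RawProc.IsPrefix Q₂.1 R.1 := by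
  have hIP := semInv_of_processOf hP
  have hI1 := semInv_of_processOf Q₁.2.1
  have hI2 := semInv_of_processOf Q₂.2.1
  have F1 := prefix_flowPT_full hI1 hIP hP.niceDoms Q₁.2.1.niceDoms h1
  have F1' := prefix_flowPT_full hI2 hIP hP.niceDoms Q₂.2.1.niceDoms h2
  have F2 := prefix_flowTP_full hI1 hIP hP.niceDoms Q₁.2.1.niceDoms h1
  have F2' := prefix_flowTP_full hI2 hIP hP.niceDoms Q₂.2.1.niceDoms h2
  set tr : Set β := Q₁.1.transitions ∪ Q₂.1.transitions with htr
  set R : RawProc S T α β :=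
    { places := Q₁.1.places ∪ Q₂.1.places
      transitions := tr
      flowPT := fun p t => if t ∈ tr then P.flowPT p t else 0
      flowTP := fun t p => if t ∈ tr then P.flowTP t p else 0
      initMark := P.initMark
      projS := P.projS
      projT := P.projT } with hR
  have hPTfull : ∀ t ∈ tr, ∀ b, R.flowPT b t = P.flowPT b t := fun t ht b => if_pos ht
  have hTPfull : ∀ t ∈ tr, ∀ b, R.flowTP t b = P.flowTP t b := fun t ht b => if_pos ht
  have hPT0 : ∀ p t, P.flowPT p t = 0 → R.flowPT p t = 0 := by
    intro p t h0
    show (if t ∈ tr then P.flowPT p t else 0) = 0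
    split_ifs <;> simp [h0]
  have hTP0 : ∀ t p, P.flowTP t p = 0 → R.flowTP t p = 0 := by
    intro t p h0
    show (if t ∈ tr then P.flowTP t p else 0) = 0
    split_ifs <;> simp [h0]
  have hPTle : ∀ p t, R.flowPT p t ≤ P.flowPT p t := by
    intro p t
    show (if t ∈ tr then P.flowPT p t else 0) ≤ P.flowPT p t
    split_ifs <;> omega
  have hTPle : ∀ t p, R.flowTP t p ≤ P.flowTP t p := by
    intro t p
    show (if t ∈ tr then P.flowTP t p else 0) ≤ P.flowTP t p
    split_ifs <;> omega
  have hPTdom : ∀ p t, R.flowPT p t ≠ 0 → p ∈ R.places ∧ t ∈ tr := by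
    intro p t hne
    have ht : t ∈ tr := by
      by_contra hc
      exact hne (if_neg hc)
    rw [hPTfull t ht] at hne
    refine ⟨?_, ht⟩
    rcases ht with ht | ht
    · exact Or.inl (Q₁.2.1.flowPT_dom p t (by rw [F1 t ht]; exact hne)).1
    · exact Or.inr (Q₂.2.1.flowPT_dom p t (by rw [F1' t ht]; exact hne)).1
  have hTPdom : ∀ t p, R.flowTP t p ≠ 0 → p ∈ R.places ∧ t ∈ tr := by
    intro t p hne
    have ht : t ∈ tr := by
      by_contra hc
      exact hne (if_neg hc)
    rw [hTPfull t ht] at hne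
    refine ⟨?_, ht⟩
    rcases ht with ht | ht
    · exact Or.inl (Q₁.2.1.flowTP_dom t p (by rw [F2 t ht]; exact hne)).1
    · exact Or.inr (Q₂.2.1.flowTP_dom t p (by rw [F2' t ht]; exact hne)).1
  have hflowRel : ∀ u v, R.flowRel u v → P.flowRel u v := by
    intro u v h
    cases u <;> cases v <;> simp only [RawProc.flowRel] at h ⊢
    · exact fun h0 => h (hPT0 _ _ h0)
    · exact fun h0 => h (hTP0 _ _ h0)
  have hRplaces : R.places ⊆ P.places := Set.union_subset h1.1 h2.1
  have hRtr : tr ⊆ P.transitions := Set.union_subset h1.2.1 h2.2.1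
  have hproc : IsProcessOf N R := by
    constructor
    · exact hPTdom
    · exact hTPdom
    · intro p hp
      by_contra hne
      apply hp
      left
      by_contra hq
      exact hne ((congrFun h1.2.2.1 p).symm.trans (Q₁.2.1.initMark_dom p hq))
    · intro p hp
      constructor
      · refine ((hP.pre_place p (hRplaces hp)).1).anti ?_
        intro t ht
        exact fun h0 => ht (hTP0 t p h0)
      · intro t
        exact le_trans (hTPle t p) ((hP.pre_place p (hRplaces hp)).2 t)
    · intro p hp
      constructor
      · refine ((hP.post_place p (hRplaces hp)).1).anti ?_
        intro t ht
        exact fun h0 => ht (hPT0 p t h0)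
      · intro t
        exact le_trans (hPTle p t) ((hP.post_place p (hRplaces hp)).2 t)
    · -- init_one
      intro p hp hz
      rcases hp with hp | hp
      · have : ∀ t, Q₁.1.flowTP t p = 0 := by
          intro t
          by_contra hne
          have ht : t ∈ Q₁.1.transitions := (Q₁.2.1.flowTP_dom t p hne).2
          have := hz t
          rw [hTPfull t (Or.inl ht), ← F2 t ht p] at this
          exact hne this
        have := Q₁.2.1.init_one p hp this
        show P.initMark p = 1
        rw [← congrFun h1.2.2.1 p]
        exact this
      · have : ∀ t, Q₂.1.flowTP t p = 0 := by
          intro t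
          by_contra hne
          have ht : t ∈ Q₂.1.transitions := (Q₂.2.1.flowTP_dom t p hne).2
          have := hz t
          rw [hTPfull t (Or.inr ht), ← F2' t ht p] at this
          exact hne this
        have := Q₂.2.1.init_one p hp this
        show P.initMark p = 1
        rw [← congrFun h2.2.2.1 p]
        exact this
    · -- init_zero
      rintro p hp ⟨t, hne⟩
      have ht : t ∈ tr := by
        by_contra hc
        exact hne (if_neg hc)
      rw [hTPfull t ht] at hne
      exact hP.init_zero p (hRplaces hp) ⟨t, hne⟩
    · intro x hx
      exact hP.acyclic x (causal_mono hflowRel hx)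
    · intro t ht
      refine (hP.finite_past t (hRtr ht)).subset ?_
      intro u hu
      exact causal_mono hflowRel hu
    · intro t ht
      refine (hP.t_pre_fin t (hRtr ht)).subset ?_
      intro p hp
      exact fun h0 => hp (hPT0 p t h0)
    · -- t_pre_ne
      intro t ht
      rcases ht with ht' | ht'
      · obtain ⟨p, hp⟩ := Q₁.2.1.t_pre_ne t ht'
        refine ⟨p, ?_⟩
        rw [hPTfull t (Or.inl ht'), ← F1 t ht' p]
        exact hp
      · obtain ⟨p, hp⟩ := Q₂.2.1.t_pre_ne t ht'
        refine ⟨p, ?_⟩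
        rw [hPTfull t (Or.inr ht'), ← F1' t ht' p]
        exact hp
    · intro t ht
      refine (hP.t_post_fin t (hRtr ht)).subset ?_
      intro p hp
      exact fun h0 => hp (hTP0 t p h0)
    · exact hP.proj_init_fin
    · exact hP.proj_init
    · intro t ht s
      have e1 : (∑ᶠ p ∈ {p | P.projS p = s}, R.flowPT p t) =
          ∑ᶠ p ∈ {p | P.projS p = s}, P.flowPT p t :=
        finsum_mem_congr rfl fun p _ => hPTfull t ht p
      exact e1.trans (hP.proj_pre t (hRtr ht) s)
    · intro t ht s
      have e1 : (∑ᶠ p ∈ {p | P.projS p = s}, R.flowTP t p) =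
          ∑ᶠ p ∈ {p | P.projS p = s}, P.flowTP t p :=
        finsum_mem_congr rfl fun p _ => hTPfull t ht p
      exact e1.trans (hP.proj_post t (hRtr ht) s)
  have hfin : R.FiniteProc := Q₁.2.2.union Q₂.2.2
  refine ⟨⟨R, hproc, hfin⟩, ⟨hRplaces, hRtr, rfl, ?_, fun _ _ => rfl, fun _ _ => rfl⟩, ?_, ?_⟩
  · intro p _ t ht
    exact ⟨hPTfull t ht p, hTPfull t ht p⟩
  · refine ⟨Set.subset_union_left, Set.subset_union_left, h1.2.2.1, ?_, ?_, ?_⟩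
    · intro p hp t ht
      constructor
      · rw [hPTfull t (Or.inl ht) p, ← F1 t ht p]
      · rw [hTPfull t (Or.inl ht) p, ← F2 t ht p]
    · intro p hp
      exact h1.2.2.2.2.1 p hp
    · intro t ht
      exact h1.2.2.2.2.2 t ht
  · refine ⟨Set.subset_union_right, Set.subset_union_right, h2.2.2.1, ?_, ?_, ?_⟩
    · intro p hp t ht
      constructor
      · rw [hPTfull t (Or.inr ht) p, ← F1' t ht p]
      · rw [hTPfull t (Or.inr ht) p, ← F2' t ht p]
    · intro p hp
      exact h2.2.2.2.2.1 p hp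
    · intro t ht
      exact h2.2.2.2.2.2 t ht

lemma bdRunLE_refl_class (R : FinProcOf N α β) : bdRunLE N (bdClass N R) (bdClass N R) :=
  ⟨R, R, rfl, rfl, R.1, R.1, Relation.ReflTransGen.refl, prefix_refl R.1,
    Relation.ReflTransGen.refl⟩

lemma bdRunLE_of_prefix (Q R : FinProcOf N α β) (h : RawProc.IsPrefix Q.1 R.1) :
    bdRunLE N (bdClass N Q) (bdClass N R) :=
  ⟨Q, R, rfl, rfl, Q.1, R.1, Relation.ReflTransGen.refl, h, Relation.ReflTransGen.refl⟩

end BDProofAux10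

/-- Lemma 7 of the paper: for any GR-process `P` of `N`, the
prefix-closure `⌊P⌋ = ↓{⟦P'⟧ | P' ≤ P, P' finite}` is a BD-run of `N`. -/
theorem bdify_isBDRun {S T α β : Type*} (N : Net S T)
    (P : RawProc S T α β) (hP : IsProcessOf N P) :
    IsBDRun N (BDify N P) := by
  constructor
  · intro x y hxy hy
    obtain ⟨Q₀, hQ₀, hle⟩ := hy
    exact ⟨Q₀, hQ₀, bdRunLE_trans hxy hle⟩
  · intro x hx y hy
    obtain ⟨Qx, hQx, hlex⟩ := hx
    obtain ⟨Qy, hQy, hley⟩ := hy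
    obtain ⟨R, hRP, hR1, hR2⟩ := union_prefix hP Qx Qy hQx hQy
    refine ⟨bdClass N R, ⟨R, hRP, bdRunLE_refl_class R⟩, ?_, ?_⟩
    · exact bdRunLE_trans hlex (bdRunLE_of_prefix Qx R hR1)
    · exact bdRunLE_trans hley (bdRunLE_of_prefix Qy R hR2)
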